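/- arXiv:1402.4761 — 8 statements merged into one kernel-verified Lean document; each statement's English description precedes it below -/
import Mathlib

section
/- Let A be the free associative ℚ-algebra on noncommuting generators d_1, d_2, d_3, …, and let D : A → A be any ℚ-linear derivation (satisfying the Leibniz rule) with D(d_i) = d_{i+1} for all i ≥ 1. Define C_0 = 1 and C_n = d_1·C_{n−1} + D(C_{n−1}) for n ≥ 1. Then for all n ≥ 0, C_{n+1} = Σ_{k=0}^{n} binom(n,k) · C_{n−k} · d_{k+1}; in particular C_n equals the noncommutative Bell polynomial B_n. -/
open Finset

/-- The noncommutative Bell polynomials: `B 0 = 1`,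
`B (n+1) = ∑_{k=0}^{n} (n choose k) · B (n-k) · d (k+1)`. -/
noncomputable def ncBell {A : Type*} [Ring A] (d : ℕ → A) : ℕ → A
  | 0 => 1
  | n + 1 => ∑ k ∈ Finset.range (n + 1), (n.choose k : A) * (ncBell d (n - k) * d (k + 1))
  termination_by n => n
  decreasing_by exact Nat.lt_succ_of_le (Nat.sub_le n k)

theorem stmt0 (D : FreeAlgebra ℚ ℕ →ₗ[ℚ] FreeAlgebra ℚ ℕ)
    (hLeib : ∀ x y : FreeAlgebra ℚ ℕ, D (x * y) = D x * y + x * D y)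
    (hD : ∀ i : ℕ, 1 ≤ i → D (FreeAlgebra.ι ℚ i) = FreeAlgebra.ι ℚ (i + 1))
    (C : ℕ → FreeAlgebra ℚ ℕ) (hC0 : C 0 = 1)
    (hCs : ∀ n : ℕ, C (n + 1) = FreeAlgebra.ι ℚ 1 * C n + D (C n)) :
    (∀ n : ℕ, C (n + 1) = ∑ k ∈ Finset.range (n + 1),
        (n.choose k : FreeAlgebra ℚ ℕ) * (C (n - k) * FreeAlgebra.ι ℚ (k + 1))) ∧
    (∀ n : ℕ, C n = ncBell (fun i => FreeAlgebra.ι ℚ i) n) := by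
  set d : ℕ → FreeAlgebra ℚ ℕ := fun i => FreeAlgebra.ι ℚ i with hd
  have hD1 : D 1 = 0 := by
    have h := hLeib 1 1
    simp only [mul_one, one_mul] at h
    have : D 1 + D 1 - D 1 = D 1 - D 1 := by rw [← h]
    simpa using this
  have key : ∀ n : ℕ, C (n + 1) =
      ∑ k ∈ Finset.range (n + 1), n.choose k • (C (n - k) * d (k + 1)) := by
    intro n
    induction n with
    | zero => simp [hCs 0, hC0, hD1]; rfl
    | succ n ih =>
      have hDterm : ∀ k, k ∈ Finset.range (n + 1) →
          D (n.choose k • (C (n - k) * d (k + 1)))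
            = n.choose k • (D (C (n - k)) * d (k + 1) + C (n - k) * d (k + 2)) := by
        intro k hk
        rw [map_nsmul, hLeib, hD (k + 1) (by omega)]
      have hDs : D (C (n + 1)) = ∑ k ∈ Finset.range (n + 1),
          n.choose k • (D (C (n - k)) * d (k + 1) + C (n - k) * d (k + 2)) := by
        rw [ih, map_sum, Finset.sum_congr rfl hDterm]
      have lhs_eq : C (n + 1 + 1) = ∑ k ∈ Finset.range (n + 1),
          n.choose k • (C (n - k + 1) * d (k + 1) + C (n - k) * d (k + 2)) := by
        rw [hCs (n + 1), hDs, ih, Finset.mul_sum, ← Finset.sum_add_distrib]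
        refine Finset.sum_congr rfl fun k hk => ?_
        rw [mul_smul_comm, ← smul_add]
        congr 1
        rw [hCs (n - k), add_mul, mul_assoc, add_assoc]
      rw [lhs_eq]
      -- Now massage the RHS.
      have rhs_eq : ∑ k ∈ Finset.range (n + 2), (n + 1).choose k • (C (n + 1 - k) * d (k + 1))
          = (∑ k ∈ Finset.range (n + 1), n.choose (k + 1) • (C (n - k) * d (k + 2))
            + C (n + 1) * d 1)
            + ∑ k ∈ Finset.range (n + 1), n.choose k • (C (n - k) * d (k + 2)) := by
        rw [Finset.sum_range_succ' _ (n + 1)]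
        simp only [Nat.choose_succ_succ, add_smul, Nat.choose_zero_right, one_smul,
          Nat.succ_sub_succ_eq_sub, Finset.sum_add_distrib, Nat.sub_zero]
        abel
      have aux : ∑ k ∈ Finset.range (n + 1), n.choose (k + 1) • (C (n - k) * d (k + 2))
          + C (n + 1) * d 1
          = ∑ k ∈ Finset.range (n + 1), n.choose k • (C (n - k + 1) * d (k + 1)) := by
        have h1 : ∑ k ∈ Finset.range (n + 2), n.choose k • (C (n + 1 - k) * d (k + 1))
            = ∑ k ∈ Finset.range (n + 1), n.choose (k + 1) • (C (n - k) * d (k + 2))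
              + C (n + 1) * d 1 := by
          rw [Finset.sum_range_succ' _ (n + 1)]
          simp [Nat.succ_sub_succ_eq_sub]
        have h2 : ∑ k ∈ Finset.range (n + 2), n.choose k • (C (n + 1 - k) * d (k + 1))
            = ∑ k ∈ Finset.range (n + 1), n.choose k • (C (n - k + 1) * d (k + 1)) := by
          rw [Finset.sum_range_succ]
          simp only [Nat.choose_succ_self, zero_smul, add_zero]
          refine Finset.sum_congr rfl fun k hk => ?_
          rw [Finset.mem_range] at hk
          have : n + 1 - k = n - k + 1 := by omega
          rw [this]
        rw [← h1, h2]
      rw [rhs_eq, aux, ← Finset.sum_add_distrib]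
      refine Finset.sum_congr rfl fun k hk => ?_
      rw [← smul_add]
  have keyC : ∀ n : ℕ, C (n + 1) = ∑ k ∈ Finset.range (n + 1),
      (n.choose k : FreeAlgebra ℚ ℕ) * (C (n - k) * d (k + 1)) := by
    intro n
    rw [key n]
    refine Finset.sum_congr rfl fun k hk => ?_
    rw [nsmul_eq_mul]
  refine ⟨keyC, ?_⟩
  intro n
  induction n using Nat.strong_induction_on with
  | _ n ih =>
    match n with
    | 0 => rw [hC0, ncBell]
    | n + 1 =>
      rw [keyC n, ncBell]
      refine Finset.sum_congr rfl fun k hk => ?_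
      rw [ih (n - k) (Nat.lt_succ_of_le (Nat.sub_le n k))]
end

section
/- For all n ≥ k ≥ 0, the commutative partial Bell polynomial satisfies B_{n,k} = Σ over all tuples (α_1,…,α_n) of natural numbers with α_1 + α_2 + ⋯ + α_n = k and α_1 + 2α_2 + ⋯ + nα_n = n of (n!/(α_1!·α_2!⋯α_n!)) · ∏_{i=1}^{n} (d_i/i!)^{α_i}, as an identity in the polynomial ring ℚ[d_1, d_2, …]. -/
open Finset MvPolynomial

/-- The (commutative or noncommutative) partial Bell polynomials:
`B (0,0) = 1`, `B (n,0) = 0` for `n ≥ 1`, `B (0,k) = 0` for `k ≥ 1`, and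
`B (n+1, k+1) = ∑_{j=0}^{n} (n choose j) · B (n-j, k) · d (j+1)`. -/
noncomputable def pBell {A : Type*} [Ring A] (d : ℕ → A) : ℕ → ℕ → A
  | 0, 0 => 1
  | _ + 1, 0 => 0
  | 0, _ + 1 => 0
  | n + 1, k + 1 =>
      ∑ j ∈ Finset.range (n + 1), (n.choose j : A) * (pBell d (n - j) k * d (j + 1))
  termination_by _ k => k

section helpers
variable {N : ℕ} {M : Type*} [CommMonoid M]

@[to_additive]
lemma prod_update_univ (g : Fin N → ℕ → M) (β : Fin N → ℕ) (j : Fin N) (b : ℕ) :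
    ∏ i, g i (Function.update β j b i) =
      g j b * ∏ i ∈ Finset.univ.erase j, g i (β i) := by
  rw [← Finset.mul_prod_erase Finset.univ (fun i => g i (Function.update β j b i))
    (Finset.mem_univ j), Function.update_self]
  congr 1
  refine Finset.prod_congr rfl fun i hi => ?_
  rw [Function.update_of_ne (Finset.ne_of_mem_erase hi)]

end helpers

noncomputable def Yp (i : ℕ) : MvPolynomial ℕ ℚ := C (((i + 1).factorial : ℚ)⁻¹) * X (i + 1)

def Tt (N m k : ℕ) : Finset (Fin N → ℕ) :=
  (Finset.Nat.antidiagonalTuple N k).filter (fun α => ∑ i : Fin N, ((i : ℕ) + 1) * α i = m)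

lemma mem_Tt {N m k : ℕ} {α : Fin N → ℕ} :
    α ∈ Tt N m k ↔ (∑ i, α i) = k ∧ (∑ i : Fin N, ((i : ℕ) + 1) * α i) = m := by
  simp [Tt, Finset.Nat.mem_antidiagonalTuple]

noncomputable def G (N m k : ℕ) : MvPolynomial ℕ ℚ :=
  ∑ α ∈ Tt N m k,
    C ((m.factorial : ℚ) / ∏ i : Fin N, ((α i).factorial : ℚ)) * ∏ i : Fin N, Yp (i : ℕ) ^ α i


lemma Tt_last_zero {N m k : ℕ} (h : m ≤ N) {β : Fin (N + 1) → ℕ}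
    (hβ : β ∈ Tt (N + 1) m k) : β (Fin.last N) = 0 := by
  rw [mem_Tt] at hβ
  have h1 : ((Fin.last N : ℕ) + 1) * β (Fin.last N) ≤ m := by
    rw [← hβ.2]
    exact Finset.single_le_sum (f := fun i : Fin (N + 1) => ((i : ℕ) + 1) * β i)
      (fun i _ => Nat.zero_le _) (Finset.mem_univ _)
  simp only [Fin.val_last] at h1
  nlinarith

lemma G_succ (N m k : ℕ) (h : m ≤ N) : G (N + 1) m k = G N m k := by
  unfold G
  refine Finset.sum_nbij' (fun β => Fin.init β) (fun α => Fin.snoc α 0) ?_ ?_ ?_ ?_ ?_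
  · intro β hβ
    have hlast := Tt_last_zero h hβ
    rw [mem_Tt] at hβ ⊢
    constructor
    · rw [← hβ.1, Fin.sum_univ_castSucc, hlast, add_zero]
      rfl
    · rw [← hβ.2, Fin.sum_univ_castSucc, hlast, Fin.val_last, Nat.mul_zero, add_zero]
      rfl
  · intro α hα
    rw [mem_Tt] at hα ⊢
    constructor
    · rw [Fin.sum_univ_castSucc]
      simp [hα.1]
    · rw [Fin.sum_univ_castSucc]
      simp [hα.2]
  · intro β hβ
    have hlast := Tt_last_zero h hβ
    funext i
    rcases Fin.eq_castSucc_or_eq_last i with ⟨i', rfl⟩ | rfl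
    · simp [Fin.init]
    · simp [hlast]
  · intro α hα
    funext i
    simp [Fin.init]
  · intro β hβ
    have hlast := Tt_last_zero h hβ
    rw [Fin.prod_univ_castSucc, Fin.prod_univ_castSucc (f := fun i => Yp (i : ℕ) ^ β i)]
    simp [hlast, Fin.init]

lemma G_pad (m k : ℕ) : ∀ N, m ≤ N → G N m k = G m m k := by
  intro N
  induction N with
  | zero =>
    intro h
    obtain rfl : m = 0 := Nat.le_zero.mp h
    rfl
  | succ N ih =>
    intro h
    rcases Nat.lt_or_ge m (N + 1) with h' | h'
    · rw [G_succ N m k (Nat.lt_succ_iff.mp h'), ih (Nat.lt_succ_iff.mp h')]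
    · have : m = N + 1 := le_antisymm h h'
      subst this
      rfl

lemma bellInnerSum (n : ℕ) (α : Fin (n + 1) → ℕ)
    (hw : ∑ i : Fin (n + 1), ((i : ℕ) + 1) * α i = n + 1) :
    C (((n + 1).factorial : ℚ) / ∏ i : Fin (n + 1), ((α i).factorial : ℚ)) * ∏ i : Fin (n + 1), Yp (i : ℕ) ^ α i =
      ∑ j : Fin (n + 1),
        C ((n.factorial * ((j : ℕ) + 1) * α j : ℚ) / ∏ i : Fin (n + 1), ((α i).factorial : ℚ)) *
          ∏ i : Fin (n + 1), Yp (i : ℕ) ^ α i := by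
  rw [← Finset.sum_mul, ← map_sum, ← Finset.sum_div]
  congr 3
  have : ∑ j : Fin (n + 1), (n.factorial * ((j : ℕ) + 1) * α j : ℚ) =
      (n.factorial : ℚ) * ((∑ j : Fin (n + 1), ((j : ℕ) + 1) * α j : ℕ) : ℚ) := by
    push_cast
    rw [Finset.mul_sum]
    exact Finset.sum_congr rfl fun j _ => by ring
  rw [this, hw]
  push_cast [Nat.factorial_succ]
  ring

lemma term_eq (n : ℕ) (j : Fin (n + 1)) (α : Fin (n + 1) → ℕ) (hj : 0 < α j) :
    C ((n.factorial * ((j : ℕ) + 1) * α j : ℚ) / ∏ i : Fin (n + 1), ((α i).factorial : ℚ)) *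
        ∏ i : Fin (n + 1), Yp (i : ℕ) ^ α i =
      (n.choose (j : ℕ) : MvPolynomial ℕ ℚ) *
        (C (((n - (j : ℕ)).factorial : ℚ) /
            ∏ i : Fin (n + 1), (((Function.update α j (α j - 1)) i).factorial : ℚ)) *
          (∏ i : Fin (n + 1), Yp (i : ℕ) ^ (Function.update α j (α j - 1)) i) * X ((j : ℕ) + 1)) := by
  obtain ⟨b, hb⟩ : ∃ b, α j = b + 1 := ⟨α j - 1, by omega⟩
  have hA : ∏ i : Fin (n + 1), ((α i).factorial : ℚ) =
      ((α j).factorial : ℚ) * ∏ i ∈ Finset.univ.erase j, ((α i).factorial : ℚ) :=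
    (Finset.mul_prod_erase _ _ (Finset.mem_univ j)).symm
  have hM : ∏ i : Fin (n + 1), Yp (i : ℕ) ^ α i =
      Yp (j : ℕ) ^ α j * ∏ i ∈ Finset.univ.erase j, Yp (i : ℕ) ^ α i :=
    (Finset.mul_prod_erase _ _ (Finset.mem_univ j)).symm
  have hA' : ∏ i : Fin (n + 1), (((Function.update α j (α j - 1)) i).factorial : ℚ) =
      (((α j - 1)).factorial : ℚ) * ∏ i ∈ Finset.univ.erase j, ((α i).factorial : ℚ) :=
    prod_update_univ (fun _ b => ((b.factorial : ℚ))) α j _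
  have hM' : ∏ i : Fin (n + 1), Yp (i : ℕ) ^ (Function.update α j (α j - 1)) i =
      Yp (j : ℕ) ^ (α j - 1) * ∏ i ∈ Finset.univ.erase j, Yp (i : ℕ) ^ α i :=
    prod_update_univ (fun i b => Yp (i : ℕ) ^ b) α j _
  rw [hA, hM, hA', hM', hb]
  simp only [Nat.add_sub_cancel]
  set A := ∏ i ∈ Finset.univ.erase j, ((α i).factorial : ℚ) with hAdef
  set Mo := ∏ i ∈ Finset.univ.erase j, Yp (i : ℕ) ^ α i with hMdef
  have hAne : A ≠ 0 := by
    rw [hAdef]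
    refine Finset.prod_ne_zero_iff.mpr fun i _ => ?_
    exact_mod_cast Nat.factorial_ne_zero _
  have hX : X ((j : ℕ) + 1) = (C ((((j : ℕ) + 1).factorial : ℚ)) : MvPolynomial ℕ ℚ) * Yp (j : ℕ) := by
    rw [Yp, ← mul_assoc, ← map_mul,
      mul_inv_cancel₀ (Nat.cast_ne_zero.mpr (Nat.factorial_ne_zero _)), map_one, one_mul]
  rw [hX, show (n.choose (j : ℕ) : MvPolynomial ℕ ℚ) = C ((n.choose (j : ℕ) : ℚ)) from
    (map_natCast (C : ℚ →+* MvPolynomial ℕ ℚ) _).symm, pow_succ]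
  have hnat : n.choose (j : ℕ) * (j : ℕ).factorial * (n - (j : ℕ)).factorial = n.factorial :=
    Nat.choose_mul_factorial_mul_factorial (Nat.lt_succ_iff.mp j.isLt)
  have key : ((n.factorial : ℚ) * (((j : ℕ) : ℚ) + 1) * (((b + 1) : ℕ) : ℚ)) / (((b + 1).factorial : ℚ) * A) =
      (n.choose (j : ℕ) : ℚ) * ((((n - (j : ℕ)).factorial : ℚ)) / ((b.factorial : ℚ) * A)) *
        ((((j : ℕ) + 1).factorial : ℚ)) := by
    have h1 : ((b + 1).factorial : ℚ) = (b + 1) * (b.factorial : ℚ) := by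
      push_cast [Nat.factorial_succ]; ring
    have h2 : ((((j : ℕ) + 1).factorial : ℚ)) = ((j : ℕ) + 1) * ((j : ℕ).factorial : ℚ) := by
      push_cast [Nat.factorial_succ]; ring
    have hb0 : ((b.factorial : ℚ)) ≠ 0 := by exact_mod_cast Nat.factorial_ne_zero _
    rw [h1, h2]
    field_simp
    push_cast [← hnat]
    ring
  rw [key, map_mul, map_mul]
  ring

lemma G_step (n k : ℕ) :
    G (n + 1) (n + 1) (k + 1) =
      ∑ j ∈ Finset.range (n + 1),
        (n.choose j : MvPolynomial ℕ ℚ) * (G (n + 1) (n - j) k * X (j + 1)) := by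
  rw [← Fin.sum_univ_eq_sum_range (fun j => (n.choose j : MvPolynomial ℕ ℚ) *
    (G (n + 1) (n - j) k * X (j + 1)))]
  unfold G
  simp only [Finset.mul_sum, Finset.sum_mul]
  have L1 : ∀ α ∈ Tt (n + 1) (n + 1) (k + 1),
      C (((n + 1).factorial : ℚ) / ∏ i : Fin (n + 1), ((α i).factorial : ℚ)) * ∏ i : Fin (n + 1), Yp (i : ℕ) ^ α i =
        ∑ j ∈ Finset.univ.filter (fun j : Fin (n + 1) => 0 < α j),
          C ((n.factorial * ((j : ℕ) + 1) * α j : ℚ) / ∏ i : Fin (n + 1), ((α i).factorial : ℚ)) *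
            ∏ i : Fin (n + 1), Yp (i : ℕ) ^ α i := by
    intro α hα
    rw [mem_Tt] at hα
    rw [Finset.sum_filter_of_ne, ← bellInnerSum n α hα.2]
    intro j _ hne
    by_contra h0
    apply hne
    have : α j = 0 := by omega
    rw [this]
    push_cast
    rw [mul_zero, zero_div, map_zero, zero_mul]
  rw [Finset.sum_congr rfl L1, Finset.sum_sigma', Finset.sum_sigma']
  refine Finset.sum_nbij'
    (fun p => ⟨p.2, Function.update p.1 p.2 (p.1 p.2 - 1)⟩)
    (fun q => ⟨Function.update q.2 q.1 (q.2 q.1 + 1), q.1⟩) ?_ ?_ ?_ ?_ ?_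
  · rintro ⟨α, j⟩ hp
    dsimp only
    rw [Finset.mem_sigma] at hp
    have hα : (∑ i : Fin (n + 1), α i = k + 1) ∧
        (∑ i : Fin (n + 1), ((i : ℕ) + 1) * α i = n + 1) := mem_Tt.mp hp.1
    have hj1 : 0 < α j := (Finset.mem_filter.mp hp.2).2
    rw [Finset.mem_sigma]
    refine ⟨Finset.mem_univ _, ?_⟩
    rw [mem_Tt]
    dsimp only
    have hs : ∑ i : Fin (n + 1), Function.update α j (α j - 1) i =
        (α j - 1) + ∑ i ∈ Finset.univ.erase j, α i :=
      sum_update_univ (M := ℕ) (fun _ b => b) α j (α j - 1)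
    have hs' : ∑ i : Fin (n + 1), α i = α j + ∑ i ∈ Finset.univ.erase j, α i :=
      (Finset.add_sum_erase Finset.univ (fun i : Fin (n + 1) => α i) (Finset.mem_univ j)).symm
    have hw : ∑ i : Fin (n + 1), ((i : ℕ) + 1) * Function.update α j (α j - 1) i =
        ((j : ℕ) + 1) * (α j - 1) + ∑ i ∈ Finset.univ.erase j, ((i : ℕ) + 1) * α i :=
      sum_update_univ (M := ℕ) (fun i b => ((i : ℕ) + 1) * b) α j (α j - 1)
    have hw' : ∑ i : Fin (n + 1), ((i : ℕ) + 1) * α i =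
        ((j : ℕ) + 1) * α j + ∑ i ∈ Finset.univ.erase j, ((i : ℕ) + 1) * α i :=
      (Finset.add_sum_erase Finset.univ (fun i : Fin (n + 1) => ((i : ℕ) + 1) * α i)
        (Finset.mem_univ j)).symm
    have hmul : ((j : ℕ) + 1) * (α j - 1) + ((j : ℕ) + 1) = ((j : ℕ) + 1) * α j := by
      obtain ⟨b, hb⟩ : ∃ b, α j = b + 1 := ⟨α j - 1, by omega⟩
      rw [hb, Nat.add_sub_cancel]
      ring
    have hge : ((j : ℕ) + 1) ≤ ((j : ℕ) + 1) * α j := Nat.le_mul_of_pos_right _ hj1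
    have hjn : (j : ℕ) < n + 1 := j.isLt
    constructor
    · rw [hs]
      omega
    · rw [hw]
      omega
  · rintro ⟨j, β⟩ hq
    dsimp only
    rw [Finset.mem_sigma] at hq
    have hβ : (∑ i : Fin (n + 1), β i = k) ∧
        (∑ i : Fin (n + 1), ((i : ℕ) + 1) * β i = n - (j : ℕ)) := mem_Tt.mp hq.2
    rw [Finset.mem_sigma]
    have hs : ∑ i : Fin (n + 1), Function.update β j (β j + 1) i =
        (β j + 1) + ∑ i ∈ Finset.univ.erase j, β i :=
      sum_update_univ (M := ℕ) (fun _ b => b) β j (β j + 1)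
    have hs' : ∑ i : Fin (n + 1), β i = β j + ∑ i ∈ Finset.univ.erase j, β i :=
      (Finset.add_sum_erase Finset.univ (fun i : Fin (n + 1) => β i) (Finset.mem_univ j)).symm
    have hw : ∑ i : Fin (n + 1), ((i : ℕ) + 1) * Function.update β j (β j + 1) i =
        ((j : ℕ) + 1) * (β j + 1) + ∑ i ∈ Finset.univ.erase j, ((i : ℕ) + 1) * β i :=
      sum_update_univ (M := ℕ) (fun i b => ((i : ℕ) + 1) * b) β j (β j + 1)
    have hw' : ∑ i : Fin (n + 1), ((i : ℕ) + 1) * β i =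
        ((j : ℕ) + 1) * β j + ∑ i ∈ Finset.univ.erase j, ((i : ℕ) + 1) * β i :=
      (Finset.add_sum_erase Finset.univ (fun i : Fin (n + 1) => ((i : ℕ) + 1) * β i)
        (Finset.mem_univ j)).symm
    have hmul : ((j : ℕ) + 1) * (β j + 1) = ((j : ℕ) + 1) * β j + ((j : ℕ) + 1) := by ring
    have hjn : (j : ℕ) < n + 1 := j.isLt
    constructor
    · rw [mem_Tt]
      constructor
      · rw [hs]; omega
      · rw [hw]; omega
    · rw [Finset.mem_filter]
      exact ⟨Finset.mem_univ _, by simp⟩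
  · rintro ⟨α, j⟩ hp
    rw [Finset.mem_sigma] at hp
    have hj1 : 0 < α j := (Finset.mem_filter.mp hp.2).2
    simp only [Function.update_self, Function.update_idem]
    congr 1
    rw [Nat.sub_add_cancel hj1, Function.update_eq_self]
  · rintro ⟨j, β⟩ hq
    simp only [Function.update_self, Function.update_idem, Nat.add_sub_cancel]
    congr 1
    rw [Function.update_eq_self]
  · rintro ⟨α, j⟩ hp
    rw [Finset.mem_sigma] at hp
    have hj1 : 0 < α j := (Finset.mem_filter.mp hp.2).2
    rw [term_eq n j α hj1]

lemma G_zero_zero : G 0 0 0 = 1 := by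
  unfold G Tt
  rw [Finset.Nat.antidiagonalTuple_zero_zero]
  simp

lemma G_succ_zero (m : ℕ) : G (m + 1) (m + 1) 0 = 0 := by
  unfold G Tt
  rw [Finset.Nat.antidiagonalTuple_zero_right, Finset.filter_singleton]
  rw [if_neg (by simp)]
  exact Finset.sum_empty

lemma G_zero_succ (k : ℕ) : G 0 0 (k + 1) = 0 := by
  unfold G Tt
  rw [Finset.Nat.antidiagonalTuple_zero_succ, Finset.filter_empty, Finset.sum_empty]

theorem stmt1' (k : ℕ) : ∀ n, pBell (fun i => (X i : MvPolynomial ℕ ℚ)) n k = G n n k := by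
  induction k with
  | zero =>
    intro n
    cases n with
    | zero => rw [G_zero_zero, pBell]
    | succ m => rw [G_succ_zero, pBell]
  | succ k ih =>
    intro n
    cases n with
    | zero => rw [G_zero_succ, pBell]
    | succ m =>
      rw [pBell, G_step m k]
      refine Finset.sum_congr rfl fun j hj => ?_
      rw [ih (m - j), G_pad (m - j) k (m + 1) (by omega)]


theorem stmt1 (n k : ℕ) (hkn : k ≤ n) :
    pBell (fun i => (X i : MvPolynomial ℕ ℚ)) n k =
      ∑ α ∈ (Finset.Nat.antidiagonalTuple n k).filter
          (fun α => ∑ i : Fin n, ((i : ℕ) + 1) * α i = n),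
        C ((n.factorial : ℚ) / ∏ i : Fin n, ((α i).factorial : ℚ)) *
          ∏ i : Fin n, (C ((((i : ℕ) + 1).factorial : ℚ)⁻¹) * X ((i : ℕ) + 1)) ^ α i := by
  rw [stmt1' k n]
  rfl
end

section
/- For every n ≥ 1, the commutative Bell polynomial B_n equals the determinant of the n×n matrix 𝐁_n over ℚ[d_1,d_2,…] whose entries are (𝐁_n)_{ij} = binom(j−1, j−i) · d_{j−i+1} for i ≤ j, (𝐁_n)_{i+1,i} = −1 on the subdiagonal, and (𝐁_n)_{ij} = 0 for i > j+1. -/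
open Finset MvPolynomial

noncomputable def bA (i j : ℕ) : MvPolynomial ℕ ℚ :=
  if i ≤ j then ((j.choose (j - i) : MvPolynomial ℕ ℚ)) * X (j - i + 1)
  else if i = j + 1 then -1 else 0

noncomputable def bM (n : ℕ) : Matrix (Fin n) (Fin n) (MvPolynomial ℕ ℚ) :=
  Matrix.of fun i j => bA i j

lemma bA_of_le {i j : ℕ} (h : i ≤ j) :
    bA i j = ((j.choose (j - i) : MvPolynomial ℕ ℚ)) * X (j - i + 1) := if_pos h

lemma bA_sub (j : ℕ) : bA (j + 1) j = -1 := by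
  unfold bA
  rw [if_neg (by omega), if_pos rfl]

lemma bA_zero {i j : ℕ} (h : j + 1 < i) : bA i j = 0 := by
  unfold bA
  rw [if_neg (by omega), if_neg (by omega)]

lemma det_minor (n : ℕ) (i : Fin (n + 1)) :
    ((bM (n + 1)).submatrix i.succAbove Fin.castSucc).det =
      (-1) ^ (n - (i : ℕ)) * (bM (i : ℕ)).det := by
  have hin : (i : ℕ) ≤ n := Nat.lt_succ_iff.mp i.isLt
  have hi : (i : ℕ) + (n - (i : ℕ)) = n := Nat.add_sub_cancel' hin
  let e' : Fin (i : ℕ) ⊕ Fin (n - (i : ℕ)) ≃ Fin n := finSumFinEquiv.trans (finCongr hi)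
  have hvall : ∀ r : Fin (i:ℕ), (e' (Sum.inl r) : ℕ) = r := by
    intro r; simp [e', finSumFinEquiv]
  have hvalr : ∀ s : Fin (n - (i:ℕ)), (e' (Sum.inr s) : ℕ) = (i : ℕ) + s := by
    intro s; simp [e', finSumFinEquiv]
  have hsal : ∀ r : Fin (i:ℕ), ((i.succAbove (e' (Sum.inl r))) : ℕ) = r := by
    intro r
    have h1 := hvall r
    have hlt : (e' (Sum.inl r)).castSucc < i := by
      rw [Fin.lt_def, Fin.coe_castSucc, h1]; exact r.isLt
    rw [Fin.succAbove_of_castSucc_lt _ _ hlt, Fin.coe_castSucc, h1]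
  have hsar : ∀ s : Fin (n - (i:ℕ)), ((i.succAbove (e' (Sum.inr s))) : ℕ) = (i : ℕ) + s + 1 := by
    intro s
    have h1 := hvalr s
    have hle : i ≤ (e' (Sum.inr s)).castSucc := by
      rw [Fin.le_def, Fin.coe_castSucc, h1]; omega
    rw [Fin.succAbove_of_le_castSucc _ _ hle, Fin.val_succ, h1]
  let B : Matrix (Fin (i:ℕ)) (Fin (n - (i:ℕ))) (MvPolynomial ℕ ℚ) :=
    Matrix.of fun r t => bA r ((i:ℕ) + t)
  let D : Matrix (Fin (n - (i:ℕ))) (Fin (n - (i:ℕ))) (MvPolynomial ℕ ℚ) :=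
    Matrix.of fun s t => bA ((i:ℕ) + s + 1) ((i:ℕ) + t)
  have key : ((bM (n + 1)).submatrix i.succAbove Fin.castSucc).submatrix e' e' =
      Matrix.fromBlocks (bM (i:ℕ)) B 0 D := by
    ext x y
    rcases x with r | s <;> rcases y with c | t <;>
      simp only [Matrix.submatrix_apply, bM, Matrix.of_apply,
        Matrix.fromBlocks_apply₁₁, Matrix.fromBlocks_apply₁₂,
        Matrix.fromBlocks_apply₂₁, Matrix.fromBlocks_apply₂₂,
        Matrix.zero_apply, B, D, Fin.coe_castSucc]
    · rw [hsal r, hvall c]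
    · rw [hsal r, hvalr t]
    · rw [hsar s, hvall c]
      rw [bA_zero (show (c:ℕ) + 1 < (i:ℕ) + s + 1 by have := c.isLt; omega)]
    · rw [hsar s, hvalr t]
  have hD : D.det = (-1) ^ (n - (i : ℕ)) := by
    have ht : D.BlockTriangular id := by
      intro s t hst
      simp only [id] at hst
      show bA ((i:ℕ) + s + 1) ((i:ℕ) + t) = 0
      exact bA_zero (by omega)
    rw [Matrix.det_of_upperTriangular ht]
    have : ∀ s : Fin (n - (i:ℕ)), D s s = -1 := by
      intro s
      show bA ((i:ℕ) + s + 1) ((i:ℕ) + s) = -1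
      exact bA_sub _
    rw [Finset.prod_congr rfl (fun s _ => this s)]
    simp
  calc ((bM (n + 1)).submatrix i.succAbove Fin.castSucc).det
      = (((bM (n + 1)).submatrix i.succAbove Fin.castSucc).submatrix e' e').det :=
        (Matrix.det_submatrix_equiv_self e' _).symm
    _ = (Matrix.fromBlocks (bM (i:ℕ)) B 0 D).det := by rw [key]
    _ = (bM (i:ℕ)).det * D.det := Matrix.det_fromBlocks_zero₂₁ _ _ _
    _ = (-1) ^ (n - (i : ℕ)) * (bM (i:ℕ)).det := by rw [hD, mul_comm]

lemma det_bM : ∀ n : ℕ, (bM n).det = ncBell (fun k => (X k : MvPolynomial ℕ ℚ)) n := by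
  intro n
  induction n using Nat.strong_induction_on with
  | _ n ih =>
    match n with
    | 0 => simp [bM, ncBell, Matrix.det_fin_zero]
    | n + 1 =>
      rw [Matrix.det_succ_column (bM (n + 1)) (Fin.last n)]
      have step : ∀ i : Fin (n + 1),
          (-1 : MvPolynomial ℕ ℚ) ^ ((i : ℕ) + (Fin.last n : ℕ)) *
              bM (n+1) i (Fin.last n) *
              ((bM (n+1)).submatrix i.succAbove (Fin.last n).succAbove).det =
          ((n.choose (n - (i:ℕ)) : MvPolynomial ℕ ℚ)) * X (n - (i:ℕ) + 1) *
            ncBell (fun k => (X k : MvPolynomial ℕ ℚ)) (i : ℕ) := by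
        intro i
        have hin : (i : ℕ) ≤ n := Nat.lt_succ_iff.mp i.isLt
        rw [Fin.succAbove_last, det_minor, ih _ i.isLt]
        have hb : bM (n+1) i (Fin.last n) =
            ((n.choose (n - (i:ℕ)) : MvPolynomial ℕ ℚ)) * X (n - (i:ℕ) + 1) := by
          show bA (i : ℕ) n = _
          rw [bA_of_le hin]
        rw [hb]
        have hsign : (-1 : MvPolynomial ℕ ℚ) ^ ((i : ℕ) + (Fin.last n : ℕ)) *
            (-1) ^ (n - (i:ℕ)) = 1 := by
          rw [← pow_add]
          have : (i : ℕ) + (Fin.last n : ℕ) + (n - (i:ℕ)) = 2 * n := by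
            simp [Fin.val_last]; omega
          rw [this, pow_mul]
          norm_num
        calc _ = ((-1 : MvPolynomial ℕ ℚ) ^ ((i : ℕ) + (Fin.last n : ℕ)) * (-1) ^ (n - (i:ℕ))) *
              (((n.choose (n - (i:ℕ)) : MvPolynomial ℕ ℚ)) * X (n - (i:ℕ) + 1) *
                ncBell (fun k => (X k : MvPolynomial ℕ ℚ)) (i : ℕ)) := by ring
          _ = _ := by rw [hsign]; ring
      rw [Finset.sum_congr rfl (fun i _ => step i)]
      rw [Fin.sum_univ_eq_sum_range
        (fun j => ((n.choose (n - j) : MvPolynomial ℕ ℚ)) * X (n - j + 1) *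
          ncBell (fun k => (X k : MvPolynomial ℕ ℚ)) j)]
      rw [show ncBell (fun k => (X k : MvPolynomial ℕ ℚ)) (n+1) =
        ∑ k ∈ Finset.range (n + 1), (n.choose k : MvPolynomial ℕ ℚ) *
          (ncBell (fun k => (X k : MvPolynomial ℕ ℚ)) (n - k) * X (k + 1)) from by rw [ncBell]]
      rw [← Finset.sum_range_reflect (fun k => (n.choose k : MvPolynomial ℕ ℚ) *
          (ncBell (fun k => (X k : MvPolynomial ℕ ℚ)) (n - k) * X (k + 1))) (n+1)]
      refine Finset.sum_congr rfl fun j hj => ?_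
      have hj' : j ≤ n := Nat.lt_succ_iff.mp (Finset.mem_range.mp hj)
      have h1 : n + 1 - 1 - j = n - j := by omega
      have h2 : n - (n - j) = j := by omega
      rw [h1, h2]
      ring

/-- The commutative Bell polynomial `B_n` is the determinant of the `n × n` matrix with
entries `binom (j-1) (j-i) · d (j-i+1)` for `i ≤ j` (here in 0-based indexing:
`binom j (j-i) · d (j-i+1)`), `-1` on the subdiagonal and `0` below it. -/
theorem stmt5 (n : ℕ) (hn : 1 ≤ n) :
    ncBell (fun i => (X i : MvPolynomial ℕ ℚ)) n =
      Matrix.det (Matrix.of fun i j : Fin n =>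
        if (i : ℕ) ≤ (j : ℕ) then
          (((j : ℕ).choose ((j : ℕ) - (i : ℕ)) : MvPolynomial ℕ ℚ)) *
            X ((j : ℕ) - (i : ℕ) + 1)
        else if (i : ℕ) = (j : ℕ) + 1 then -1 else 0) := by
  rw [← det_bM n]
  rfl
end

section
/- For every n ≥ 1, the noncommutative Bell polynomial B_n equals the (1,n) quasideterminant polynomial P_n(a) with entries a_{ij} := binom(j−1, i−1) · d_{j−i+1} for 1 ≤ i ≤ j ≤ n; that is, B_n = a_{1n} + Σ_{k=1}^{n−1} Σ_{1 ≤ j_1 < ⋯ < j_k < n} a_{1,j_1} a_{j_1+1,j_2} ⋯ a_{j_k+1,n} (equivalently, B_n = |𝐁_n|_{1n} where 𝐁_n is the n×n matrix with these entries on and above the diagonal, −1 on the subdiagonal and 0 below). -/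
open Finset

/-- `chainProd a n i [j₁, …, jₖ] = a i j₁ * a (j₁+1) j₂ * ⋯ * a (jₖ+1) n`. -/
noncomputable def chainProd {A : Type*} [Ring A] (a : ℕ → ℕ → A) (n : ℕ) : ℕ → List ℕ → A
  | i, [] => a i n
  | i, j :: l => a i j * chainProd a n (j + 1) l

/-- The `(1,n)` quasideterminant polynomial `P_n(a)`, with `P_0 = 1`. -/
noncomputable def quasiP {A : Type*} [Ring A] (a : ℕ → ℕ → A) : ℕ → A
  | 0 => 1
  | n + 1 => ∑ s ∈ (Finset.Icc 1 n).powerset, chainProd a (n + 1) 1 (s.sort (· ≤ ·))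

lemma chainProd_append {A : Type*} [Ring A] (a : ℕ → ℕ → A) (N j : ℕ) (i : ℕ) (l : List ℕ) :
    chainProd a N i (l ++ [j]) = chainProd a j i l * a (j + 1) N := by
  induction l generalizing i with
  | nil => simp [chainProd]
  | cons x l ih => simp [chainProd, ih, mul_assoc]

lemma sort_insert_top (s : Finset ℕ) (j : ℕ) (h : ∀ x ∈ s, x < j) :
    (insert j s).sort (· ≤ ·) = s.sort (· ≤ ·) ++ [j] := by
  have hj : j ∉ s := fun hmem => lt_irrefl j (h j hmem)
  have hperm : List.Perm ((insert j s).sort (· ≤ ·)) (s.sort (· ≤ ·) ++ [j]) := by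
    have p1 : List.Perm ((insert j s).sort (· ≤ ·)) ((insert j s).toList) :=
      Finset.sort_perm_toList _ _
    have p2 : List.Perm ((insert j s).toList) (j :: s.toList) := Finset.toList_insert hj
    have p3 : List.Perm s.toList (s.sort (· ≤ ·)) := (Finset.sort_perm_toList _ _).symm
    have p4 : List.Perm (j :: s.sort (· ≤ ·)) (s.sort (· ≤ ·) ++ [j]) := by
      simpa using (List.perm_append_comm (l₁ := [j]) (l₂ := s.sort (· ≤ ·)))
    exact ((p1.trans p2).trans (p3.cons j)).trans p4
  have hs2 : List.Pairwise (· ≤ ·) (s.sort (· ≤ ·) ++ [j]) := by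
    rw [List.pairwise_append]
    refine ⟨Finset.pairwise_sort _ _, List.pairwise_singleton _ _, ?_⟩
    intro x hx y hy
    simp only [List.mem_singleton] at hy
    subst hy
    exact le_of_lt (h x (by simpa using hx))
  exact List.Perm.eq_of_pairwise' (Finset.pairwise_sort _ _) hs2 hperm

lemma powerset_chain_sum {A : Type*} [Ring A] (a : ℕ → ℕ → A) :
    ∀ n N, ∑ s ∈ (Finset.Icc 1 n).powerset, chainProd a N 1 (s.sort (· ≤ ·)) =
      ∑ j ∈ Finset.range (n + 1), quasiP a j * a (j + 1) N := by
  intro n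
  induction n with
  | zero => intro N; simp [chainProd, quasiP]
  | succ n ih =>
    intro N
    have hnot : n + 1 ∉ Finset.Icc 1 n := by simp
    have hicc : Finset.Icc 1 (n + 1) = insert (n + 1) (Finset.Icc 1 n) := by
      ext x; simp; omega
    have hcong : ∀ s ∈ (Finset.Icc 1 n).powerset,
        chainProd a N 1 ((insert (n + 1) s).sort (· ≤ ·)) =
        chainProd a (n + 1) 1 (s.sort (· ≤ ·)) * a (n + 2) N := by
      intro s hs
      rw [Finset.mem_powerset] at hs
      rw [sort_insert_top s (n + 1) (fun x hx => by
        have := hs hx; simp [Finset.mem_Icc] at this; omega), chainProd_append]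
    rw [hicc, Finset.sum_powerset_insert hnot, ih N, Finset.sum_congr rfl hcong,
      ← Finset.sum_mul]
    conv_rhs => rw [Finset.sum_range_succ]
    congr 1

lemma quasiP_succ {A : Type*} [Ring A] (a : ℕ → ℕ → A) (n : ℕ) :
    quasiP a (n + 1) = ∑ j ∈ Finset.range (n + 1), quasiP a j * a (j + 1) (n + 1) :=
  powerset_chain_sum a n (n + 1)

lemma bell_eq {A : Type*} [Ring A] (d : ℕ → A) (n : ℕ) :
    ncBell d n = quasiP (fun i j => ((j - 1).choose (i - 1) : A) * d (j - i + 1)) n := by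
  induction n using Nat.strong_induction_on with
  | _ n ih =>
    match n with
    | 0 => simp [ncBell, quasiP]
    | n + 1 =>
      rw [ncBell, quasiP_succ, ← Finset.sum_range_reflect]
      apply Finset.sum_congr rfl
      intro j hj
      rw [Finset.mem_range] at hj
      have hjn : j ≤ n := by omega
      have h1 : n + 1 - 1 - j = n - j := by omega
      have h2 : n - (n - j) = j := by omega
      rw [h1, h2, ih j (by omega), Nat.choose_symm hjn]
      have h3 : n + 1 - (j + 1) + 1 = n - j + 1 := by omega
      simp only [Nat.add_sub_cancel, h3]
      rw [← mul_assoc, ← mul_assoc,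
        (Nat.cast_commute (n.choose j)
          (quasiP (fun i j => ((j - 1).choose (i - 1) : A) * d (j - i + 1)) j)).eq]

/-- The noncommutative Bell polynomial `B_n` equals the `(1,n)` quasideterminant
polynomial with entries `a i j = binom (j-1) (i-1) · d (j-i+1)`. -/
theorem stmt8 (n : ℕ) (hn : 1 ≤ n) :
    ncBell (fun i => FreeAlgebra.ι ℚ i) n =
      quasiP (fun i j =>
        ((j - 1).choose (i - 1) : FreeAlgebra ℚ ℕ) * FreeAlgebra.ι ℚ (j - i + 1)) n :=
  bell_eq _ n
end

section
/- For all n, k ≥ 1, the noncommutative partial Bell polynomial satisfies B_{n,k} = Σ over all compositions (j_1,…,j_k) of n (i.e. tuples of integers j_i ≥ 1 with j_1 + ⋯ + j_k = n) of (n!/(j_1!·j_2!⋯j_k!)) · κ(j_1,…,j_k) · d_{j_1} d_{j_2} ⋯ d_{j_k}, where κ(j_1,…,j_k) := (j_1 j_2 ⋯ j_k)/(j_1 · (j_1+j_2) ⋯ (j_1+⋯+j_k)) ∈ ℚ. -/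
open Finset

namespace Stmt10Aux

noncomputable def coef (k n : ℕ) (j : Fin k → ℕ) : ℚ :=
  ((n.factorial : ℚ) / ∏ i : Fin k, ((j i).factorial : ℚ)) *
    ((∏ i : Fin k, (j i : ℚ)) / ∏ i : Fin k, (∑ l ∈ Finset.Iic i, (j l : ℚ)))

noncomputable def R (k n : ℕ) : FreeAlgebra ℚ ℕ :=
  ∑ j ∈ (Finset.Nat.antidiagonalTuple k n).filter (fun j => ∀ i : Fin k, 1 ≤ j i),
    coef k n j • (List.ofFn fun i : Fin k => FreeAlgebra.ι ℚ (j i)).prod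

lemma Iic_castSucc {k : ℕ} (i : Fin k) :
    Finset.Iic (Fin.castSucc i) = (Finset.Iic i).map Fin.castSuccEmb := by
  ext l
  simp only [Finset.mem_Iic, Finset.mem_map, Fin.castSuccEmb, Function.Embedding.coeFn_mk]
  constructor
  · intro h
    refine ⟨⟨l.1, lt_of_le_of_lt h i.isLt⟩, ?_, ?_⟩
    · exact h
    · rfl
  · rintro ⟨a, ha, rfl⟩
    exact (Fin.castSucc_le_castSucc_iff).2 ha

lemma sum_Iic_castSucc {M : Type*} [AddCommMonoid M] {k : ℕ} (g : Fin (k + 1) → M) (i : Fin k) :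
    ∑ l ∈ Finset.Iic (Fin.castSucc i), g l = ∑ l ∈ Finset.Iic i, g (Fin.castSucc l) := by
  rw [Iic_castSucc, Finset.sum_map]
  rfl

lemma Iic_last (k : ℕ) : Finset.Iic (Fin.last k) = Finset.univ := by
  ext l; simp [Fin.le_last]

lemma pBell_succ {A : Type*} [Ring A] (d : ℕ → A) (n k : ℕ) :
    pBell d (n + 1) (k + 1)
      = ∑ j ∈ Finset.range (n + 1), (n.choose j : A) * (pBell d (n - j) k * d (j + 1)) := by
  rw [pBell.eq_def]

lemma pBell_zero_succ {A : Type*} [Ring A] (d : ℕ → A) (k : ℕ) : pBell d 0 (k + 1) = 0 := by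
  rw [pBell.eq_def]

lemma pBell_succ_zero {A : Type*} [Ring A] (d : ℕ → A) (n : ℕ) : pBell d (n + 1) 0 = 0 := by
  rw [pBell.eq_def]

lemma pBell_zero_zero {A : Type*} [Ring A] (d : ℕ → A) : pBell d 0 0 = 1 := by
  rw [pBell.eq_def]

lemma natCast_mul_eq (c : ℕ) (x : FreeAlgebra ℚ ℕ) :
    (c : FreeAlgebra ℚ ℕ) * x = (c : ℚ) • x := by
  rw [← nsmul_eq_mul, ← Nat.cast_smul_eq_nsmul ℚ]

lemma coef_snoc (k m j : ℕ) (hj : j ≤ m) (f : Fin k → ℕ) (hf1 : ∀ i, 1 ≤ f i)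
    (hfs : ∑ i, f i = m - j) :
    coef (k + 1) (m + 1) (Fin.snoc f (j + 1)) = (m.choose j : ℚ) * coef k (m - j) f := by
  have htot : ∑ i : Fin (k + 1), (Fin.snoc f (j + 1) : Fin (k+1) → ℕ) i = m + 1 := by
    rw [Fin.sum_univ_castSucc]
    simp only [Fin.snoc_castSucc, Fin.snoc_last, hfs]
    omega
  have h1 : ∏ i : Fin (k + 1), (((Fin.snoc f (j + 1) : Fin (k+1) → ℕ) i).factorial : ℚ)
      = (∏ i : Fin k, ((f i).factorial : ℚ)) * ((j + 1).factorial : ℚ) := by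
    rw [Fin.prod_univ_castSucc]; simp
  have h2 : ∏ i : Fin (k + 1), (((Fin.snoc f (j + 1) : Fin (k+1) → ℕ) i : ℚ))
      = (∏ i : Fin k, (f i : ℚ)) * ((j : ℚ) + 1) := by
    rw [Fin.prod_univ_castSucc]; push_cast; simp
  have h3 : ∏ i : Fin (k + 1), (∑ l ∈ Finset.Iic i, (((Fin.snoc f (j + 1) : Fin (k+1) → ℕ) l : ℚ)))
      = (∏ i : Fin k, (∑ l ∈ Finset.Iic i, (f l : ℚ))) * ((m : ℚ) + 1) := by
    rw [Fin.prod_univ_castSucc]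
    congr 1
    · refine Finset.prod_congr rfl fun i _ => ?_
      rw [sum_Iic_castSucc]
      simp
    · rw [Iic_last]
      rw [← Nat.cast_sum, htot]
      push_cast
      ring
  have ha : (∏ i : Fin k, ((f i).factorial : ℚ)) ≠ 0 :=
    Finset.prod_ne_zero_iff.2 fun i _ => Nat.cast_ne_zero.2 (Nat.factorial_ne_zero _)
  have hp : (∏ i : Fin k, (∑ l ∈ Finset.Iic i, (f l : ℚ))) ≠ 0 := by
    refine ne_of_gt (Finset.prod_pos fun i _ => ?_)
    refine Finset.sum_pos' (fun l _ => by positivity) ⟨i, Finset.mem_Iic.2 le_rfl, ?_⟩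
    exact_mod_cast hf1 i
  unfold coef
  rw [h1, h2, h3, Nat.cast_choose ℚ hj]
  have hm1 : ((m + 1).factorial : ℚ) = ((m : ℚ) + 1) * (m.factorial : ℚ) := by
    push_cast [Nat.factorial_succ]; ring
  have hj1 : ((j + 1).factorial : ℚ) = ((j : ℚ) + 1) * (j.factorial : ℚ) := by
    push_cast [Nat.factorial_succ]; ring
  rw [hm1, hj1]
  have hjf : (j.factorial : ℚ) ≠ 0 := Nat.cast_ne_zero.2 (Nat.factorial_ne_zero _)
  have hmjf : ((m - j).factorial : ℚ) ≠ 0 := Nat.cast_ne_zero.2 (Nat.factorial_ne_zero _)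
  have hm1' : ((m : ℚ) + 1) ≠ 0 := by positivity
  have hj1' : ((j : ℚ) + 1) ≠ 0 := by positivity
  field_simp

lemma R_zero (k : ℕ) (hk : 1 ≤ k) : R k 0 = 0 := by
  unfold R
  rw [Finset.filter_false_of_mem, Finset.sum_empty]
  intro x hx hall
  rw [Finset.Nat.mem_antidiagonalTuple] at hx
  have := Finset.sum_eq_zero_iff.1 hx ⟨0, hk⟩ (Finset.mem_univ _)
  have := hall ⟨0, hk⟩
  omega

lemma pBell_zero {A : Type*} [Ring A] (d : ℕ → A) (k : ℕ) (hk : 1 ≤ k) :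
    pBell d 0 k = 0 := by
  obtain ⟨k, rfl⟩ : ∃ k', k = k' + 1 := ⟨k - 1, by omega⟩
  exact pBell_zero_succ d k

lemma pBell_one {A : Type*} [Ring A] (d : ℕ → A) (m : ℕ) :
    pBell d (m + 1) 1 = d (m + 1) := by
  rw [pBell_succ]
  rw [Finset.sum_eq_single m]
  · rw [Nat.sub_self, pBell_zero_zero, Nat.choose_self]
    simp
  · intro b hb hbm
    rw [Finset.mem_range] at hb
    obtain ⟨t, ht⟩ : ∃ t, m - b = t + 1 := ⟨m - b - 1, by omega⟩
    rw [ht, pBell_succ_zero]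
    simp
  · intro h
    exact absurd (Finset.mem_range.2 (Nat.lt_succ_self m)) h

lemma R_one (m : ℕ) : R 1 (m + 1) = FreeAlgebra.ι ℚ (m + 1) := by
  unfold R
  rw [Finset.Nat.antidiagonalTuple_one]
  rw [Finset.filter_singleton, if_pos (by intro i; fin_cases i <;> simp)]
  rw [Finset.sum_singleton]
  have h : coef 1 (m + 1) ![m + 1] = 1 := by
    unfold coef
    have : Finset.Iic (0 : Fin 1) = {0} := by decide
    simp only [Fin.prod_univ_one, this, Finset.sum_singleton, Matrix.cons_val_zero]
    have h1 : (((m + 1).factorial : ℚ)) ≠ 0 := Nat.cast_ne_zero.2 (Nat.factorial_ne_zero _)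
    have h2 : ((m : ℚ) + 1) ≠ 0 := by positivity
    push_cast
    field_simp
  rw [h, one_smul]
  simp

lemma R_succ (k m : ℕ) :
    R (k + 1) (m + 1)
      = ∑ j ∈ Finset.range (m + 1), (m.choose j : ℚ) • (R k (m - j) * FreeAlgebra.ι ℚ (j + 1)) := by
  unfold R
  simp only [Finset.sum_mul, smul_mul_assoc, Finset.smul_sum, smul_smul]
  rw [Finset.sum_sigma']
  refine Finset.sum_nbij' (fun g => ⟨g (Fin.last k) - 1, Fin.init g⟩)
    (fun p => Fin.snoc p.2 (p.1 + 1)) ?_ ?_ ?_ ?_ ?_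
  · rintro g hg
    simp only [Finset.mem_filter, Finset.Nat.mem_antidiagonalTuple] at hg
    obtain ⟨hsum, hall⟩ := hg
    rw [Fin.sum_univ_castSucc] at hsum
    have hlast := hall (Fin.last k)
    simp only [Finset.mem_sigma, Finset.mem_range, Finset.mem_filter,
      Finset.Nat.mem_antidiagonalTuple]
    refine ⟨by omega, ?_, fun i => hall i.castSucc⟩
    show ∑ i : Fin k, g i.castSucc = m - (g (Fin.last k) - 1)
    generalize hS : ∑ i : Fin k, g (Fin.castSucc i) = S at hsum ⊢
    omega
  · rintro ⟨j, f⟩ hp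
    simp only [Finset.mem_sigma, Finset.mem_range, Finset.mem_filter,
      Finset.Nat.mem_antidiagonalTuple] at hp
    obtain ⟨hj, hsum, hall⟩ := hp
    simp only [Finset.mem_filter, Finset.Nat.mem_antidiagonalTuple]
    constructor
    · rw [Fin.sum_univ_castSucc]
      simp only [Fin.snoc_castSucc, Fin.snoc_last, hsum]
      omega
    · intro i
      refine Fin.lastCases ?_ ?_ i
      · simp
      · intro i'; simpa using hall i'
  · intro g hg
    simp only [Finset.mem_filter, Finset.Nat.mem_antidiagonalTuple] at hg
    have h1 : g (Fin.last k) - 1 + 1 = g (Fin.last k) := by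
      have := hg.2 (Fin.last k); omega
    show Fin.snoc (Fin.init g) (g (Fin.last k) - 1 + 1) = g
    rw [h1, Fin.snoc_init_self]
  · rintro ⟨j, f⟩ _
    refine Sigma.ext (by simp) (heq_of_eq ?_)
    simp [Fin.init_snoc]
  · intro g hg
    simp only [Finset.mem_filter, Finset.Nat.mem_antidiagonalTuple] at hg
    obtain ⟨hsum, hall⟩ := hg
    have hlast := hall (Fin.last k)
    have hsum' : ∑ i : Fin k, Fin.init g i + g (Fin.last k) = m + 1 := by
      show ∑ i : Fin k, g i.castSucc + g (Fin.last k) = m + 1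
      rw [← Fin.sum_univ_castSucc]
      exact hsum
    set j := g (Fin.last k) - 1 with hjdef
    have hj : j ≤ m := by omega
    have hfs : ∑ i, Fin.init g i = m - j := by
      generalize hS : ∑ i, Fin.init g i = S at hsum' ⊢
      omega
    have hg' : g = Fin.snoc (Fin.init g) (j + 1) := by
      rw [show j + 1 = g (Fin.last k) by omega, Fin.snoc_init_self]
    calc coef (k + 1) (m + 1) g • (List.ofFn fun i : Fin (k+1) => FreeAlgebra.ι ℚ (g i)).prod
        = coef (k + 1) (m + 1) (Fin.snoc (Fin.init g) (j + 1)) •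
            (List.ofFn fun i : Fin (k+1) =>
              FreeAlgebra.ι ℚ ((Fin.snoc (Fin.init g) (j + 1) : Fin (k+1) → ℕ) i)).prod := by
          conv_lhs => rw [hg']
      _ = ((m.choose j : ℚ) * coef k (m - j) (Fin.init g)) •
            ((List.ofFn fun i : Fin k => FreeAlgebra.ι ℚ (Fin.init g i)).prod *
              FreeAlgebra.ι ℚ (j + 1)) := by
          rw [coef_snoc k m j hj (Fin.init g) (fun i => hall i.castSucc) hfs]
          congr 1
          rw [List.ofFn_succ']
          simp [Fin.snoc_castSucc, Fin.snoc_last, Fin.init]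

lemma key (k : ℕ) (hk : 1 ≤ k) : ∀ n : ℕ, pBell (fun i => FreeAlgebra.ι ℚ i) n k = R k n := by
  induction k, hk using Nat.le_induction with
  | base =>
    intro n
    cases n with
    | zero => rw [pBell_zero _ _ le_rfl, R_zero 1 le_rfl]
    | succ m => rw [pBell_one, R_one]
  | succ k hk IH =>
    intro n
    cases n with
    | zero => rw [pBell_zero _ _ (by omega), R_zero _ (by omega)]
    | succ m =>
      rw [pBell_succ, R_succ]
      refine Finset.sum_congr rfl fun j _ => ?_
      rw [IH (m - j), natCast_mul_eq]

end Stmt10Aux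

/-- `B_{n,k} = ∑_{compositions (j₁,…,j_k) of n} (n!/(j₁!⋯j_k!)) κ(j₁,…,j_k) d_{j₁}⋯d_{j_k}`
with `κ(j₁,…,j_k) = (j₁⋯j_k)/(j₁(j₁+j₂)⋯(j₁+⋯+j_k))`. -/
theorem stmt10 (n k : ℕ) (hn : 1 ≤ n) (hk : 1 ≤ k) :
    pBell (fun i => FreeAlgebra.ι ℚ i) n k =
      ∑ j ∈ (Finset.Nat.antidiagonalTuple k n).filter (fun j => ∀ i : Fin k, 1 ≤ j i),
        (((n.factorial : ℚ) / ∏ i : Fin k, ((j i).factorial : ℚ)) *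
            ((∏ i : Fin k, (j i : ℚ)) /
              ∏ i : Fin k, (∑ l ∈ Finset.Iic i, (j l : ℚ)))) •
          (List.ofFn fun i : Fin k => FreeAlgebra.ι ℚ (j i)).prod := by
  exact Stmt10Aux.key k hk n
end

section
/- For all n, k ≥ 1, the noncommutative partial Bell polynomial satisfies B_{n,k} = Σ over all compositions (j_1,…,j_k) of n (j_i ≥ 1, j_1+⋯+j_k = n) of N(j_1,…,j_k) · d_{j_1} d_{j_2} ⋯ d_{j_k}, where N(j_1,…,j_k) is the number of ordered tuples (P_1,…,P_k) of pairwise disjoint nonempty subsets of {1,…,n} with union {1,…,n}, |P_i| = j_i for each i, and max(P_1) < max(P_2) < ⋯ < max(P_k). In other words, the coefficient of each word d_{j_1}⋯d_{j_k} in B_{n,k} counts the set partitions of {1,…,n} with block sizes j_1,…,j_k whose blocks are ordered by their maxima. -/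
open Finset

variable {α β : Type*} [LinearOrder α] [LinearOrder β]

def Cond {k : ℕ} (T : Finset β) (j : Fin k → ℕ) (P : Fin k → Finset β) : Prop :=
  (∀ i, P i ⊆ T) ∧ (∀ i, (P i).card = j i) ∧
    (∀ i i', i ≠ i' → Disjoint (P i) (P i')) ∧
    (∀ x ∈ T, ∃ i, x ∈ P i) ∧
    (∀ i i', i < i' → (P i).max < (P i').max)

lemma max_lt_max_map (f : α ↪o β) {s t : Finset α} (hs : s.Nonempty) (ht : t.Nonempty) :
    (s.map f.toEmbedding).max < (t.map f.toEmbedding).max ↔ s.max < t.max := by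
  simp only [Finset.map_eq_image, RelEmbedding.coe_toEmbedding]
  rw [← Finset.coe_max' (hs.image (⇑f)), ← Finset.coe_max' (ht.image (⇑f)),
    ← Finset.coe_max' hs, ← Finset.coe_max' ht,
    Finset.max'_image f.monotone, Finset.max'_image f.monotone, WithBot.coe_lt_coe,
    WithBot.coe_lt_coe, f.lt_iff_lt]

lemma cond_map (f : α ↪o β) (S : Finset α) {k : ℕ} (j : Fin k → ℕ) (hj : ∀ i, 1 ≤ j i)
    (P : Fin k → Finset α) :
    Cond (S.map f.toEmbedding) j (fun i => (P i).map f.toEmbedding) ↔ Cond S j P := by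
  constructor
  · rintro ⟨h1, h2, h3, h4, h5⟩
    have hc : ∀ i, (P i).card = j i := fun i => by simpa using h2 i
    have hne : ∀ i, (P i).Nonempty := fun i =>
      Finset.card_pos.mp (by rw [hc i]; exact hj i)
    refine ⟨fun i => ?_, hc, fun i i' h => ?_, fun x hx => ?_, fun i i' h => ?_⟩
    · exact (Finset.map_subset_map).1 (h1 i)
    · exact (Finset.disjoint_map _).1 (h3 i i' h)
    · obtain ⟨i, hi⟩ := h4 (f x) (Finset.mem_map_of_mem _ hx)
      exact ⟨i, by simpa using hi⟩
    · exact (max_lt_max_map f (hne i) (hne i')).1 (h5 i i' h)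
  · rintro ⟨h1, h2, h3, h4, h5⟩
    have hne : ∀ i, (P i).Nonempty := fun i =>
      Finset.card_pos.mp (by rw [h2 i]; exact hj i)
    refine ⟨fun i => ?_, fun i => by simpa using h2 i, fun i i' h => ?_, fun x hx => ?_,
      fun i i' h => ?_⟩
    · exact Finset.map_subset_map.2 (h1 i)
    · exact (Finset.disjoint_map _).2 (h3 i i' h)
    · obtain ⟨y, hy, rfl⟩ := Finset.mem_map.1 hx
      obtain ⟨i, hi⟩ := h4 y hy
      exact ⟨i, Finset.mem_map_of_mem _ hi⟩
    · exact (max_lt_max_map f (hne i) (hne i')).2 (h5 i i' h)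

lemma card_cond_map (f : α ↪o β) (S : Finset α) {k : ℕ} (j : Fin k → ℕ) (hj : ∀ i, 1 ≤ j i) :
    Nat.card {P : Fin k → Finset β // Cond (S.map f.toEmbedding) j P}
      = Nat.card {P : Fin k → Finset α // Cond S j P} := by
  classical
  refine (Nat.card_congr (Equiv.ofBijective
    (fun P => (⟨fun i => (P.1 i).map f.toEmbedding, (cond_map f S j hj P.1).2 P.2⟩ :
      {P : Fin k → Finset β // Cond (S.map f.toEmbedding) j P})) ⟨?_, ?_⟩)).symm
  · rintro ⟨P, hP⟩ ⟨Q, hQ⟩ h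
    simp only [Subtype.mk.injEq] at h ⊢
    funext i
    exact Finset.map_injective _ (congrFun h i)
  · rintro ⟨Q, hQ⟩
    have hsub : ∀ i, Q i ⊆ S.map f.toEmbedding := hQ.1
    have key : ∀ i, ((Q i).preimage f f.injective.injOn).map f.toEmbedding = Q i := by
      intro i
      rw [Finset.map_eq_image]; simp only [RelEmbedding.coe_toEmbedding]
      rw [Finset.image_preimage]
      refine Finset.filter_true_of_mem fun x hx => ?_
      obtain ⟨y, _, rfl⟩ := Finset.mem_map.1 (hsub i hx)
      exact ⟨y, rfl⟩
    refine ⟨⟨fun i => (Q i).preimage f f.injective.injOn, ?_⟩, ?_⟩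
    · exact (cond_map f S j hj _).1 (by simpa only [key] using hQ)
    · exact Subtype.ext (funext key)

lemma card_top_block (n m : ℕ) :
    Nat.card {s : Finset (Fin (n+1)) // Fin.last n ∈ s ∧ s.card = m + 1} = n.choose m := by
  classical
  have e : {s : Finset (Fin (n+1)) // Fin.last n ∈ s ∧ s.card = m + 1} ≃
      {t // t ∈ (univ.erase (Fin.last n)).powersetCard m} :=
    { toFun := fun s => ⟨s.1.erase (Fin.last n), by
        rw [Finset.mem_powersetCard]
        refine ⟨fun x hx => ?_, ?_⟩
        · rw [Finset.mem_erase] at hx ⊢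
          exact ⟨hx.1, Finset.mem_univ _⟩
        · rw [Finset.card_erase_of_mem s.2.1, s.2.2]; rfl⟩
      invFun := fun t => ⟨insert (Fin.last n) t.1, Finset.mem_insert_self _ _, by
        have ht := Finset.mem_powersetCard.1 t.2
        rw [Finset.card_insert_of_notMem, ht.2]
        intro h
        exact (Finset.mem_erase.1 (ht.1 h)).1 rfl⟩
      left_inv := fun s => Subtype.ext (Finset.insert_erase s.2.1)
      right_inv := fun t => Subtype.ext (Finset.erase_insert (fun h =>
        (Finset.mem_erase.1 ((Finset.mem_powersetCard.1 t.2).1 h)).1 rfl)) }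
  rw [Nat.card_congr e, Nat.card_eq_fintype_card, Fintype.card_coe,
    Finset.card_powersetCard]
  congr 1
  rw [Finset.card_erase_of_mem (Finset.mem_univ _), Finset.card_univ, Fintype.card_fin]
  omega

lemma map_univ_orderEmbOfFin {β : Type*} [LinearOrder β] (t : Finset β) {c : ℕ}
    (h : t.card = c) :
    (univ : Finset (Fin c)).map (t.orderEmbOfFin h).toEmbedding = t := by
  ext x
  simp only [Finset.mem_map, Finset.mem_univ, true_and, RelEmbedding.coe_toEmbedding]
  constructor
  · rintro ⟨y, rfl⟩
    exact Finset.orderEmbOfFin_mem t h y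
  · intro hx
    have : x ∈ Set.range (t.orderEmbOfFin h) := by
      rw [Finset.range_orderEmbOfFin]; exact hx
    exact this

lemma step_card (n k : ℕ) (j : Fin (k+1) → ℕ) (hj : ∀ i, 1 ≤ j i) :
    Nat.card {P : Fin (k+1) → Finset (Fin (n+1)) // Cond univ j P}
      = n.choose (j (Fin.last k) - 1) *
        Nat.card {P : Fin k → Finset (Fin (n + 1 - j (Fin.last k))) //
          Cond univ (fun i => j i.castSucc) P} := by
  classical
  set m := j (Fin.last k) with hm
  have hm1 : 1 ≤ m := hj _
  have hj' : ∀ i : Fin k, 1 ≤ j i.castSucc := fun i => hj _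
  have hlastmem : ∀ P : {P : Fin (k+1) → Finset (Fin (n+1)) // Cond univ j P},
      Fin.last n ∈ P.1 (Fin.last k) := by
    rintro ⟨P, h1, h2, h3, h4, h5⟩
    obtain ⟨i, hi⟩ := h4 (Fin.last n) (mem_univ _)
    rcases eq_or_ne i (Fin.last k) with rfl | hne
    · exact hi
    · exfalso
      have hlt : i < Fin.last k := lt_of_le_of_ne (Fin.le_last i) hne
      have h5' := h5 i (Fin.last k) hlt
      have hub : (P (Fin.last k)).max ≤ (Fin.last n : WithBot (Fin (n+1))) :=
        Finset.max_le fun x hx => WithBot.coe_le_coe.2 (Fin.le_last x)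
      have hlb : (Fin.last n : WithBot (Fin (n+1))) ≤ (P i).max := Finset.le_max hi
      exact absurd (lt_of_le_of_lt hlb (lt_of_lt_of_le h5' hub)) (lt_irrefl _)
  set S := {s : Finset (Fin (n+1)) // Fin.last n ∈ s ∧ s.card = m} with hS
  set g : {P : Fin (k+1) → Finset (Fin (n+1)) // Cond univ j P} → S :=
    fun P => ⟨P.1 (Fin.last k), hlastmem P, P.2.2.1 (Fin.last k)⟩ with hg
  have fiber_equiv : ∀ s : S,
      {P : {P : Fin (k+1) → Finset (Fin (n+1)) // Cond univ j P} // g P = s} ≃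
      {P' : Fin k → Finset (Fin (n+1)) // Cond s.1ᶜ (fun i => j i.castSucc) P'} := by
    intro s
    refine
      { toFun := fun P => ⟨fun i => P.1.1 i.castSucc, ?_⟩
        invFun := fun P' => ⟨⟨Fin.snoc P'.1 s.1, ?_⟩, ?_⟩
        left_inv := ?_
        right_inv := ?_ }
    · obtain ⟨⟨P, h1, h2, h3, h4, h5⟩, hgs⟩ := P
      have hPl : P (Fin.last k) = s.1 := congrArg Subtype.val hgs
      refine ⟨fun i x hx => ?_, fun i => h2 _, fun i i' hne => h3 _ _ (by
          simpa [Fin.castSucc_inj] using hne), fun x hx => ?_, fun i i' hlt => h5 _ _ (by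
          simpa [Fin.castSucc_lt_castSucc_iff] using hlt)⟩
      · rw [Finset.mem_compl, ← hPl]
        intro hx'
        exact (Finset.disjoint_left.1 (h3 _ _ (Fin.castSucc_lt_last i).ne) hx) hx'
      · obtain ⟨i, hi⟩ := h4 x (mem_univ _)
        have hne : i ≠ Fin.last k := by
          rintro rfl
          rw [hPl] at hi
          exact (Finset.mem_compl.1 hx) hi
        obtain ⟨i₀, rfl⟩ := Fin.exists_castSucc_eq.2 hne
        exact ⟨i₀, hi⟩
    · -- Cond univ j (snoc P' s)
      obtain ⟨P', h1, h2, h3, h4, h5⟩ := P'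
      have hne' : ∀ i : Fin k, (P' i).Nonempty := fun i =>
        Finset.card_pos.mp (by rw [h2 i]; exact hj' i)
      have hsmax : (s.1).max = (Fin.last n : WithBot (Fin (n+1))) :=
        le_antisymm (Finset.max_le fun x _ => WithBot.coe_le_coe.2 (Fin.le_last x))
          (Finset.le_max s.2.1)
      have hPmax : ∀ i : Fin k, (P' i).max < (s.1).max := by
        intro i
        rw [hsmax, ← Finset.coe_max' (hne' i), WithBot.coe_lt_coe]
        refine lt_of_le_of_ne (Fin.le_last _) fun h => ?_
        have := h1 i (Finset.max'_mem _ (hne' i))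
        rw [h] at this
        exact (Finset.mem_compl.1 this) s.2.1
      refine ⟨fun i => Finset.subset_univ _, fun i => ?_, fun i i' hne => ?_, fun x _ => ?_,
        fun i i' hlt => ?_⟩
      · refine Fin.lastCases ?_ (fun i₀ => ?_) i
        · rw [Fin.snoc_last]; exact s.2.2
        · rw [Fin.snoc_castSucc]; exact h2 i₀
      · rcases Fin.eq_castSucc_or_eq_last i with ⟨i₀, rfl⟩ | rfl <;>
          rcases Fin.eq_castSucc_or_eq_last i' with ⟨i₁, rfl⟩ | rfl
        · rw [Fin.snoc_castSucc, Fin.snoc_castSucc]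
          exact h3 i₀ i₁ (by rintro rfl; exact hne rfl)
        · rw [Fin.snoc_last, Fin.snoc_castSucc]
          exact Finset.disjoint_left.2 fun x hx hx' => (Finset.mem_compl.1 (h1 i₀ hx)) hx'
        · rw [Fin.snoc_last, Fin.snoc_castSucc]
          exact Finset.disjoint_left.2 fun x hx hx' => (Finset.mem_compl.1 (h1 i₁ hx')) hx
        · exact absurd rfl hne
      · by_cases hx : x ∈ s.1
        · exact ⟨Fin.last k, by rw [Fin.snoc_last]; exact hx⟩
        · obtain ⟨i, hi⟩ := h4 x (Finset.mem_compl.2 hx)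
          exact ⟨i.castSucc, by rw [Fin.snoc_castSucc]; exact hi⟩
      · rcases Fin.eq_castSucc_or_eq_last i' with ⟨i₁, rfl⟩ | rfl
        · have hne'' : i ≠ Fin.last k := by
            rintro rfl
            exact absurd (lt_of_lt_of_le hlt (Fin.le_last _)) (lt_irrefl _)
          obtain ⟨i₀, rfl⟩ := Fin.exists_castSucc_eq.2 hne''
          rw [Fin.snoc_castSucc, Fin.snoc_castSucc]
          exact h5 i₀ i₁ (by simpa [Fin.castSucc_lt_castSucc_iff] using hlt)
        · have hne'' : i ≠ Fin.last k := hlt.ne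
          obtain ⟨i₀, rfl⟩ := Fin.exists_castSucc_eq.2 hne''
          rw [Fin.snoc_castSucc, Fin.snoc_last]
          exact hPmax i₀
    · refine Subtype.ext ?_
      show (Fin.snoc P'.1 s.1 : Fin (k+1) → Finset (Fin (n+1))) (Fin.last k) = s.1
      exact Fin.snoc_last _ _
    · rintro ⟨⟨P, hP⟩, hgs⟩
      have hPl : P (Fin.last k) = s.1 := congrArg Subtype.val hgs
      refine Subtype.ext (Subtype.ext (funext fun i => ?_))
      rcases Fin.eq_castSucc_or_eq_last i with ⟨i₀, rfl⟩ | rfl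
      · simp only [Fin.snoc_castSucc]
      · simp only [Fin.snoc_last, hPl]
    · rintro ⟨P', hP'⟩
      refine Subtype.ext (funext fun i => ?_)
      simp only [Fin.snoc_castSucc]
  have hcompl : ∀ s : S, (s.1ᶜ : Finset (Fin (n+1))).card = n + 1 - m := by
    intro s
    rw [Finset.card_compl, s.2.2, Fintype.card_fin]
  have fibcard : ∀ s : S,
      Nat.card {P' : Fin k → Finset (Fin (n+1)) // Cond s.1ᶜ (fun i => j i.castSucc) P'}
        = Nat.card {P : Fin k → Finset (Fin (n + 1 - m)) //
            Cond univ (fun i => j i.castSucc) P} := by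
    intro s
    have h1 : ((univ : Finset (Fin (n + 1 - m))).map
        ((s.1ᶜ).orderEmbOfFin (hcompl s)).toEmbedding) = s.1ᶜ :=
      map_univ_orderEmbOfFin _ _
    rw [← h1]
    exact card_cond_map ((s.1ᶜ).orderEmbOfFin (hcompl s)) univ _ hj'
  calc Nat.card {P : Fin (k+1) → Finset (Fin (n+1)) // Cond univ j P}
      = Nat.card (Σ s : S, {P // g P = s}) := Nat.card_congr (Equiv.sigmaFiberEquiv g).symm
    _ = ∑ s : S, Nat.card {P // g P = s} := by
        rw [Nat.card_eq_fintype_card, Fintype.card_sigma]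
        exact Finset.sum_congr rfl fun s _ => (Nat.card_eq_fintype_card).symm
    _ = ∑ s : S, Nat.card {P : Fin k → Finset (Fin (n + 1 - m)) //
          Cond univ (fun i => j i.castSucc) P} := by
        refine Finset.sum_congr rfl fun s _ => ?_
        rw [Nat.card_congr (fiber_equiv s), fibcard s]
    _ = n.choose (m - 1) * Nat.card {P : Fin k → Finset (Fin (n + 1 - m)) //
          Cond univ (fun i => j i.castSucc) P} := by
        rw [Finset.sum_const, Finset.card_univ, smul_eq_mul]
        congr 1
        rw [← Nat.card_eq_fintype_card, hS]
        have : m = (m - 1) + 1 := by omega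
        rw [this]
        exact card_top_block n (m - 1)

lemma card_cond_one (n : ℕ) (j : Fin 1 → ℕ) (hj : j 0 = n) :
    Nat.card {P : Fin 1 → Finset (Fin n) // Cond univ j P} = 1 := by
  refine Nat.card_eq_one_iff_unique.2 ⟨⟨?_⟩, ⟨⟨fun _ => univ, ?_⟩⟩⟩
  · rintro ⟨P, hP⟩ ⟨Q, hQ⟩
    have hPu : ∀ i, P i = univ := fun i => Finset.eq_univ_of_card _ (by
      rw [hP.2.1 i, Subsingleton.elim i 0, hj, Fintype.card_fin])
    have hQu : ∀ i, Q i = univ := fun i => Finset.eq_univ_of_card _ (by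
      rw [hQ.2.1 i, Subsingleton.elim i 0, hj, Fintype.card_fin])
    exact Subtype.ext (funext fun i => (hPu i).trans (hQu i).symm)
  · refine ⟨fun i => subset_rfl, fun i => ?_, fun i i' h => absurd (Subsingleton.elim i i') h,
      fun x hx => ⟨0, hx⟩, fun i i' h => absurd (Subsingleton.elim i i') h.ne⟩
    rw [Finset.card_univ, Fintype.card_fin, Subsingleton.elim i 0, hj]

lemma pBell_one {A : Type*} [Ring A] (d : ℕ → A) (n : ℕ) : pBell d (n+1) 1 = d (n+1) := by
  rw [pBell]
  rw [Finset.sum_eq_single n]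
  · simp [pBell]
  · intro j hj hne
    have : n - j ≠ 0 := by simp at hj; omega
    obtain ⟨m, hm⟩ := Nat.exists_eq_succ_of_ne_zero this
    rw [hm, pBell]; ring_nf; simp
  · simp

lemma pBell_eq {A : Type*} [Ring A] (d : ℕ → A) (k : ℕ) :
    ∀ n, 1 ≤ n → 1 ≤ k →
    pBell d n k = ∑ j ∈ (Nat.antidiagonalTuple k n).filter (fun j => ∀ i, 1 ≤ j i),
      (Nat.card {P : Fin k → Finset (Fin n) // Cond univ j P}) •
        (List.ofFn fun i : Fin k => d (j i)).prod := by
  induction k with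
  | zero => intro n _ hk; omega
  | succ k ih =>
    intro n hn _
    obtain ⟨n', rfl⟩ : ∃ n', n = n' + 1 := ⟨n - 1, by omega⟩
    rcases Nat.eq_zero_or_pos k with rfl | hk
    · -- base case k = 1
      have hset : (Nat.antidiagonalTuple 1 (n'+1)).filter (fun j => ∀ i, 1 ≤ j i)
          = {fun _ => (n'+1 : ℕ)} := by
        ext j
        simp only [Finset.mem_filter, Finset.Nat.mem_antidiagonalTuple, Finset.mem_singleton,
          Fin.sum_univ_one]
        constructor
        · rintro ⟨h1, _⟩
          funext i
          rw [Subsingleton.elim i 0, h1]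
        · rintro rfl
          exact ⟨rfl, fun i => Nat.le_add_left 1 n'⟩
      rw [pBell_one, hset, Finset.sum_singleton, card_cond_one (n'+1) _ rfl, one_smul]
      simp
    · -- inductive step
      obtain ⟨k₀, rfl⟩ : ∃ k₀, k = k₀ + 1 := ⟨k - 1, by omega⟩
      rw [pBell, Finset.sum_range_succ, Nat.sub_self]
      rw [show pBell d 0 (k₀+1) = 0 from by rw [pBell]]
      simp only [mul_zero, zero_mul, add_zero]
      have hterm : ∀ m ∈ Finset.range n',
          (n'.choose m : A) * (pBell d (n' - m) (k₀+1) * d (m+1)) =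
          ∑ j' ∈ (Nat.antidiagonalTuple (k₀+1) (n'-m)).filter (fun j => ∀ i, 1 ≤ j i),
            (n'.choose m * Nat.card {P : Fin (k₀+1) → Finset (Fin (n'-m)) // Cond univ j' P}) •
              ((List.ofFn fun i : Fin (k₀+1) => d (j' i)).prod * d (m+1)) := by
        intro m hm
        rw [Finset.mem_range] at hm
        rw [ih (n'-m) (by omega) (by omega), Finset.sum_mul, Finset.mul_sum]
        refine Finset.sum_congr rfl fun j' _ => ?_
        rw [smul_mul_assoc, ← nsmul_eq_mul, smul_smul]
      rw [Finset.sum_congr rfl hterm, Finset.sum_sigma']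
      refine Finset.sum_nbij' (fun p => (Fin.snoc p.2 (p.1 + 1) : Fin (k₀+1+1) → ℕ))
        (fun j => ⟨j (Fin.last (k₀+1)) - 1, fun i => j i.castSucc⟩) ?_ ?_ ?_ ?_ ?_
      · rintro ⟨m, j'⟩ hp
        rw [Finset.mem_sigma, Finset.mem_range, Finset.mem_filter] at hp
        dsimp only at hp ⊢
        have hsum := Finset.Nat.mem_antidiagonalTuple.1 hp.2.1
        rw [Finset.mem_filter, Finset.Nat.mem_antidiagonalTuple]
        constructor
        · rw [Fin.sum_univ_castSucc]
          simp only [Fin.snoc_castSucc, Fin.snoc_last]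
          rw [hsum]
          have := hp.1
          omega
        · intro i
          rcases Fin.eq_castSucc_or_eq_last i with ⟨i₀, rfl⟩ | rfl
          · simp only [Fin.snoc_castSucc]; exact hp.2.2 i₀
          · simp only [Fin.snoc_last]; omega
      · intro j hj
        rw [Finset.mem_filter, Finset.Nat.mem_antidiagonalTuple] at hj
        obtain ⟨hsum, hpos⟩ := hj
        rw [Fin.sum_univ_castSucc] at hsum
        have h1 : 1 ≤ ∑ i : Fin (k₀+1), j i.castSucc :=
          le_trans (hpos _) (Finset.single_le_sum
            (f := fun i : Fin (k₀+1) => j i.castSucc)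
            (fun i _ => Nat.zero_le _) (Finset.mem_univ 0))
        show (⟨j (Fin.last (k₀+1)) - 1, fun i => j i.castSucc⟩ : Σ _ : ℕ, (Fin (k₀+1) → ℕ)) ∈
          (Finset.range n').sigma (fun m =>
            (Nat.antidiagonalTuple (k₀+1) (n'-m)).filter (fun j => ∀ i, 1 ≤ j i))
        refine Finset.mem_sigma.2 ⟨Finset.mem_range.2 (by
            show j (Fin.last (k₀+1)) - 1 < n'
            have := hpos (Fin.last (k₀+1)); omega),
          Finset.mem_filter.2 ⟨Finset.Nat.mem_antidiagonalTuple.2 ?_, fun i => hpos _⟩⟩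
        show (∑ i : Fin (k₀+1), j i.castSucc) = n' - (j (Fin.last (k₀+1)) - 1)
        have := hpos (Fin.last (k₀+1))
        omega
      · rintro ⟨m, j'⟩ hp
        have h2 : (fun i : Fin (k₀+1) =>
            (Fin.snoc j' (m+1) : Fin (k₀+1+1) → ℕ) i.castSucc) = j' :=
          funext fun i => Fin.snoc_castSucc _ _ _
        show (⟨(Fin.snoc j' (m+1) : Fin (k₀+1+1) → ℕ) (Fin.last (k₀+1)) - 1,
            fun i => (Fin.snoc j' (m+1) : Fin (k₀+1+1) → ℕ) i.castSucc⟩ :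
            Σ _ : ℕ, (Fin (k₀+1) → ℕ)) = ⟨m, j'⟩
        rw [h2]
        have h1 : (Fin.snoc j' (m+1) : Fin (k₀+1+1) → ℕ) (Fin.last (k₀+1)) - 1 = m := by
          rw [Fin.snoc_last]; omega
        rw [h1]
      · intro j hj
        rw [Finset.mem_filter] at hj
        have hpos := hj.2
        funext i
        show (Fin.snoc (fun i => j i.castSucc) (j (Fin.last (k₀+1)) - 1 + 1) :
            Fin (k₀+1+1) → ℕ) i = j i
        rcases Fin.eq_castSucc_or_eq_last i with ⟨i₀, rfl⟩ | rfl
        · rw [Fin.snoc_castSucc]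
        · rw [Fin.snoc_last]
          have := hpos (Fin.last (k₀+1))
          omega
      · rintro ⟨m, j'⟩ hp
        rw [Finset.mem_sigma, Finset.mem_range, Finset.mem_filter] at hp
        dsimp only at hp ⊢
        have hposs : ∀ i : Fin (k₀+1+1), 1 ≤ (Fin.snoc j' (m+1) : Fin (k₀+1+1) → ℕ) i := by
          intro i
          rcases Fin.eq_castSucc_or_eq_last i with ⟨i₀, rfl⟩ | rfl
          · rw [Fin.snoc_castSucc]; exact hp.2.2 i₀
          · rw [Fin.snoc_last]; omega
        have hstep := step_card n' (k₀+1) (Fin.snoc j' (m+1)) hposs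
        rw [show n' + 1 - (Fin.snoc j' (m+1) : Fin (k₀+1+1) → ℕ) (Fin.last (k₀+1)) = n' - m
          from by rw [Fin.snoc_last]; omega] at hstep
        simp only [Fin.snoc_last, Nat.succ_sub_succ_eq_sub, Nat.add_sub_cancel, Nat.sub_zero] at hstep
        have e2 : (fun i : Fin (k₀+1) =>
            (Fin.snoc j' (m+1) : Fin (k₀+1+1) → ℕ) i.castSucc) = j' :=
          funext fun i => Fin.snoc_castSucc _ _ _
        rw [e2] at hstep
        have hw : (List.ofFn fun i : Fin (k₀+1+1) =>
              d ((Fin.snoc j' (m+1) : Fin (k₀+1+1) → ℕ) i)).prod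
            = (List.ofFn fun i : Fin (k₀+1) => d (j' i)).prod * d (m+1) := by
          rw [List.ofFn_succ' (fun i : Fin (k₀+1+1) =>
            d ((Fin.snoc j' (m+1) : Fin (k₀+1+1) → ℕ) i)), List.prod_concat]
          simp only [Fin.snoc_castSucc, Fin.snoc_last]
        rw [hstep, hw]

/-- The coefficient of each word `d_{j₁} ⋯ d_{j_k}` in the noncommutative partial Bell
polynomial `B_{n,k}` counts the set partitions of `{1,…,n}` with block sizes `j₁, …, j_k`
whose blocks are ordered by their maxima. -/
theorem stmt12 (n k : ℕ) (hn : 1 ≤ n) (hk : 1 ≤ k) :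
    pBell (fun i => FreeAlgebra.ι ℚ i) n k =
      ∑ j ∈ (Finset.Nat.antidiagonalTuple k n).filter (fun j => ∀ i : Fin k, 1 ≤ j i),
        (Nat.card {P : Fin k → Finset (Fin n) //
            (∀ i : Fin k, (P i).card = j i) ∧
            (∀ i i' : Fin k, i ≠ i' → Disjoint (P i) (P i')) ∧
            (∀ x : Fin n, ∃ i : Fin k, x ∈ P i) ∧
            (∀ i i' : Fin k, i < i' → (P i).max < (P i').max)}) •
          (List.ofFn fun i : Fin k => FreeAlgebra.ι ℚ (j i)).prod := by
  rw [pBell_eq (fun i => FreeAlgebra.ι ℚ i) k n hn hk]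
  refine Finset.sum_congr rfl fun j hj => ?_
  congr 1
  apply Nat.card_congr
  refine Equiv.subtypeEquivRight fun P => ?_
  constructor
  · rintro ⟨h1, h2, h3, h4, h5⟩
    exact ⟨h2, h3, fun x => h4 x (Finset.mem_univ x), h5⟩
  · rintro ⟨h2, h3, h4, h5⟩
    exact ⟨fun i => Finset.subset_univ _, h2, h3, fun x _ => h4 x, h5⟩
end

section
/- For every k ≥ 1 and all positive real numbers j_1, …, j_k, Σ_{σ ∈ S_k} ∏_{i=1}^{k} j_{σ(i)} / (j_{σ(1)} + j_{σ(2)} + ⋯ + j_{σ(i)}) = 1, where the sum runs over all permutations σ of {1,…,k}; i.e. the coefficients κ form a partition of unity on the symmetric group S_k. -/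
open Finset

/-- Reindex a sum over `Iic i` by `Fin.rev`. -/
lemma sum_Iic_rev {n : ℕ} (i : Fin n) (h : Fin n → ℝ) :
    ∑ l ∈ Finset.Iic i, h l.rev = ∑ l ∈ Finset.Ici i.rev, h l := by
  refine Finset.sum_bij' (fun l _ => l.rev) (fun l _ => l.rev) ?_ ?_ ?_ ?_ ?_
  · intro a ha
    simpa [Finset.mem_Ici, Fin.rev_le_rev] using Finset.mem_Iic.mp ha
  · intro a ha
    simp only [Finset.mem_Iic]
    rw [← Fin.rev_le_rev, Fin.rev_rev]
    exact Finset.mem_Ici.mp ha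
  · intro a _; simp
  · intro a _; simp
  · intro a _; rfl

lemma sum_Ici_succ {n : ℕ} (i : Fin n) (g : Fin (n + 1) → ℝ) :
    ∑ l ∈ Finset.Ici i.succ, g l = ∑ l ∈ Finset.Ici i, g l.succ := by
  refine (Finset.sum_bij' (fun l _ => Fin.succ l) (fun (l : Fin (n+1)) hl =>
    l.pred (by rintro rfl; simp [Fin.le_zero_iff, Fin.succ_ne_zero] at hl)) ?_ ?_ ?_ ?_ ?_).symm
  · intro a ha
    simpa [Fin.succ_le_succ_iff] using ha
  · intro a ha
    simp only [Finset.mem_Ici] at ha ⊢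
    rwa [Fin.le_pred_iff]
  · intro a _; simp
  · intro a _; simp
  · intro a _; rfl

lemma key (n : ℕ) (j : Fin n → ℝ) (hj : ∀ i, 0 < j i) :
    ∑ σ : Equiv.Perm (Fin n),
      ∏ i : Fin n, j (σ i) / (∑ l ∈ Finset.Ici i, j (σ l)) = 1 := by
  induction n with
  | zero => simp
  | succ n ih =>
    rw [← Equiv.sum_comp Equiv.Perm.decomposeFin.symm, Fintype.sum_prod_type]
    have hIci0 : (Finset.Ici (0 : Fin (n + 1))) = Finset.univ := by
      ext l; simp [Fin.zero_le]
    have hS : ∀ σ : Equiv.Perm (Fin (n + 1)),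
        ∑ l ∈ Finset.Ici (0 : Fin (n + 1)), j (σ l) = ∑ l, j l := by
      intro σ; rw [hIci0]; exact Equiv.sum_comp σ j
    have hSpos : 0 < ∑ l, j l := Finset.sum_pos (fun l _ => hj l) univ_nonempty
    have main : ∀ p : Fin (n + 1), ∀ e : Equiv.Perm (Fin n),
        ∏ i : Fin (n + 1),
          j (Equiv.Perm.decomposeFin.symm (p, e) i) /
            (∑ l ∈ Finset.Ici i, j (Equiv.Perm.decomposeFin.symm (p, e) l)) =
        (j p / ∑ l, j l) *
          ∏ i : Fin n, (fun m => j (Equiv.swap 0 p m.succ)) (e i) /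
            (∑ l ∈ Finset.Ici i, (fun m => j (Equiv.swap 0 p m.succ)) (e l)) := by
      intro p e
      rw [Fin.prod_univ_succ]
      congr 1
      · rw [hS, Equiv.Perm.decomposeFin_symm_apply_zero]
      · refine Finset.prod_congr rfl fun i _ => ?_
        rw [sum_Ici_succ]
        simp only [Equiv.Perm.decomposeFin_symm_apply_succ]
    calc ∑ p : Fin (n + 1), ∑ e : Equiv.Perm (Fin n),
          ∏ i : Fin (n + 1),
            j (Equiv.Perm.decomposeFin.symm (p, e) i) /
              (∑ l ∈ Finset.Ici i, j (Equiv.Perm.decomposeFin.symm (p, e) l))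
        = ∑ p : Fin (n + 1), (j p / ∑ l, j l) * 1 := by
          refine Finset.sum_congr rfl fun p _ => ?_
          simp only [main p]
          rw [← Finset.mul_sum]
          congr 1
          exact ih (fun m => j (Equiv.swap 0 p m.succ)) (fun i => hj _)
      _ = 1 := by
          simp only [mul_one]
          rw [← Finset.sum_div, div_self (ne_of_gt hSpos)]

/-- The coefficients `κ` form a partition of unity on the symmetric group `S_k`:
for positive reals `j₁, …, j_k`,
`∑_{σ ∈ S_k} ∏_{i=1}^{k} j_{σ(i)} / (j_{σ(1)} + ⋯ + j_{σ(i)}) = 1`. -/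
theorem stmt13 (k : ℕ) (hk : 1 ≤ k) (j : Fin k → ℝ) (hj : ∀ i, 0 < j i) :
    ∑ σ : Equiv.Perm (Fin k),
      ∏ i : Fin k, j (σ i) / (∑ l ∈ Finset.Iic i, j (σ l)) = 1 := by
  rw [← Equiv.sum_comp (Equiv.mulRight (Fin.revPerm : Equiv.Perm (Fin k)))]
  rw [← key k j hj]
  refine Finset.sum_congr rfl fun τ _ => ?_
  have h1 : ∀ i : Fin k, (Equiv.mulRight (Fin.revPerm : Equiv.Perm (Fin k)) τ) i = τ i.rev :=
    fun i => rfl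
  simp only [h1]
  have h2 : ∀ i : Fin k, ∑ l ∈ Finset.Iic i, j (τ l.rev) = ∑ l ∈ Finset.Ici i.rev, j (τ l) :=
    fun i => sum_Iic_rev i fun l => j (τ l)
  simp only [h2]
  exact Fintype.prod_equiv Fin.revPerm _
    (fun m => j (τ m) / ∑ l ∈ Finset.Ici m, j (τ l)) (fun i => rfl)
end

section
/- Let n ≥ 1 and let f, g : ℝ → ℝ be n-times continuously differentiable functions. Then for every x ∈ ℝ, the n-th derivative of the composite satisfies (f ∘ g)^{(n)}(x) = Σ_{k=0}^{n} f^{(k)}(g(x)) · B_{n,k}(g'(x), g''(x), …, g^{(n−k+1)}(x)), where B_{n,k}(g'(x), g''(x), …) denotes the commutative partial Bell polynomial evaluated at d_i := g^{(i)}(x) (the i-th derivative of g at x). -/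
open Finset MvPolynomial

open Finset MvPolynomial

lemma pBell_eq_zero {A : Type*} [Ring A] (d : ℕ → A) :
    ∀ k n : ℕ, n < k → pBell d n k = 0 := by
  intro k
  induction k with
  | zero => intro n h; omega
  | succ k ih =>
    intro n h
    match n with
    | 0 => rw [pBell]
    | n + 1 =>
      rw [pBell]
      apply Finset.sum_eq_zero
      intro j hj
      rw [ih (n - j) (by omega), zero_mul, mul_zero]

lemma map_pBell {A B : Type*} [Ring A] [Ring B] (φ : A →+* B) (d : ℕ → A) :
    ∀ k n : ℕ, φ (pBell d n k) = pBell (fun i => φ (d i)) n k := by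
  intro k
  induction k with
  | zero =>
    intro n
    match n with
    | 0 => rw [pBell, pBell]; simp
    | n + 1 => rw [pBell, pBell]; simp
  | succ k ih =>
    intro n
    match n with
    | 0 => rw [pBell, pBell]; simp
    | n + 1 =>
      rw [pBell, pBell, map_sum]
      refine Finset.sum_congr rfl fun j hj => ?_
      rw [map_mul, map_mul, map_natCast, ih]


lemma choose_sum_aux (n : ℕ) (a b : ℕ → ℝ) :
    ∑ j ∈ Finset.range (n + 2), ((n+1).choose j : ℝ) * (a (n + 1 - j) * b j)
      = ∑ j ∈ Finset.range (n + 1), (n.choose j : ℝ) * (a (n - j + 1) * b j)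
      + ∑ j ∈ Finset.range (n + 1), (n.choose j : ℝ) * (a (n - j) * b (j + 1)) := by
  rw [Finset.sum_range_succ' _ (n+1)]
  have h1 : ∀ j ∈ Finset.range (n+1),
      (((n+1).choose (j+1) : ℝ)) * (a (n + 1 - (j+1)) * b (j+1))
        = (n.choose j : ℝ) * (a (n - j) * b (j+1))
          + (n.choose (j+1) : ℝ) * (a (n - j) * b (j+1)) := by
    intro j hj
    rw [Nat.choose_succ_succ]
    have h : n + 1 - (j + 1) = n - j := by omega
    rw [h]
    push_cast
    ring
  rw [Finset.sum_congr rfl h1, Finset.sum_add_distrib]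
  have h2 : ∑ j ∈ Finset.range (n + 1), (n.choose (j+1) : ℝ) * (a (n - j) * b (j+1))
      + ((n+1).choose 0 : ℝ) * (a (n+1-0) * b 0)
      = ∑ j ∈ Finset.range (n + 1), (n.choose j : ℝ) * (a (n - j + 1) * b j) := by
    rw [Finset.sum_range_succ]
    rw [Finset.sum_range_succ' (fun j => (n.choose j : ℝ) * (a (n - j + 1) * b j)) n]
    have h3 : ∀ j ∈ Finset.range n,
        (n.choose (j+1) : ℝ) * (a (n - j) * b (j+1))
          = (n.choose (j+1) : ℝ) * (a (n - (j+1) + 1) * b (j+1)) := by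
      intro j hj
      simp only [Finset.mem_range] at hj
      have h : n - (j + 1) + 1 = n - j := by omega
      rw [h]
    rw [Finset.sum_congr rfl h3]
    simp [Nat.choose_succ_self]
  linarith

lemma iteratedDeriv_mul_sum : ∀ (n : ℕ) (u v : ℝ → ℝ), ContDiff ℝ n u → ContDiff ℝ n v →
    ∀ x : ℝ, iteratedDeriv n (fun y => u y * v y) x =
      ∑ j ∈ Finset.range (n + 1),
        (n.choose j : ℝ) * (iteratedDeriv (n - j) u x * iteratedDeriv j v x) := by
  intro n
  induction n with
  | zero => intro u v _ _ x; simp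
  | succ n ih =>
    intro u v hu hv x
    have hud : Differentiable ℝ u := hu.differentiable (by simp)
    have hvd : Differentiable ℝ v := hv.differentiable (by simp)
    have hu' : ContDiff ℝ n (deriv u) := by simpa using hu.iterate_deriv' n 1
    have hv' : ContDiff ℝ n (deriv v) := by simpa using hv.iterate_deriv' n 1
    have hun : ContDiff ℝ n u := hu.of_le (by exact_mod_cast n.le_succ)
    have hvn : ContDiff ℝ n v := hv.of_le (by exact_mod_cast n.le_succ)
    rw [iteratedDeriv_succ']
    have hderiv : deriv (fun y => u y * v y) = fun y => deriv u y * v y + u y * deriv v y := by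
      funext y
      exact deriv_mul (hud y) (hvd y)
    rw [hderiv]
    have hadd : iteratedDeriv n (fun y => deriv u y * v y + u y * deriv v y) x
        = iteratedDeriv n (fun y => deriv u y * v y) x + iteratedDeriv n (fun y => u y * deriv v y) x := by
      have c1 : ContDiff ℝ n (fun y => deriv u y * v y) := hu'.mul hvn
      have c2 : ContDiff ℝ n (fun y => u y * deriv v y) := hun.mul hv'
      simp only [iteratedDeriv_eq_iteratedFDeriv]
      rw [show (fun y => deriv u y * v y + u y * deriv v y)
            = (fun y => deriv u y * v y) + (fun y => u y * deriv v y) from rfl,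
          iteratedFDeriv_add_apply c1.contDiffAt c2.contDiffAt]
      simp
    rw [hadd, ih _ _ hu' hvn x, ih _ _ hun hv' x]
    have e1 : ∀ j ∈ Finset.range (n+1),
        (n.choose j : ℝ) * (iteratedDeriv (n - j) (deriv u) x * iteratedDeriv j v x)
          = (n.choose j : ℝ) * (iteratedDeriv (n - j + 1) u x * iteratedDeriv j v x) := by
      intro j hj
      rw [show iteratedDeriv (n - j + 1) u = iteratedDeriv (n - j) (deriv u) from
        iteratedDeriv_succ' ..]
    have e2 : ∀ j ∈ Finset.range (n+1),
        (n.choose j : ℝ) * (iteratedDeriv (n - j) u x * iteratedDeriv j (deriv v) x)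
          = (n.choose j : ℝ) * (iteratedDeriv (n - j) u x * iteratedDeriv (j + 1) v x) := by
      intro j hj
      rw [show iteratedDeriv (j + 1) v = iteratedDeriv j (deriv v) from iteratedDeriv_succ' ..]
    rw [Finset.sum_congr rfl e1, Finset.sum_congr rfl e2,
      ← choose_sum_aux n (fun i => iteratedDeriv i u x) (fun i => iteratedDeriv i v x)]

lemma faa_key : ∀ n : ℕ, ∀ f g : ℝ → ℝ, ContDiff ℝ n f → ContDiff ℝ n g → ∀ x : ℝ,
    iteratedDeriv n (f ∘ g) x =
      ∑ k ∈ Finset.range (n + 1), iteratedDeriv k f (g x) *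
        pBell (fun i => iteratedDeriv i g x) n k := by
  intro n
  induction n using Nat.strong_induction_on with
  | _ n ih =>
    match n with
    | 0 =>
      intro f g _ _ x
      rw [show (0:ℕ)+1 = 1 from rfl, Finset.range_one, Finset.sum_singleton, pBell]
      simp [Function.comp]
    | n + 1 =>
      intro f g hf hg x
      set D : ℕ → ℝ := fun i => iteratedDeriv i g x with hD
      have hfd : Differentiable ℝ f := hf.differentiable (by simp)
      have hgd : Differentiable ℝ g := hg.differentiable (by simp)
      have hf' : ContDiff ℝ n (deriv f) := by simpa using hf.iterate_deriv' n 1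
      have hg' : ContDiff ℝ n (deriv g) := by simpa using hg.iterate_deriv' n 1
      have hgn : ContDiff ℝ n g := hg.of_le (by exact_mod_cast n.le_succ)
      have hcomp : deriv (f ∘ g) = fun y => deriv f (g y) * deriv g y := by
        funext y
        exact deriv_comp y (hfd (g y)) (hgd y)
      rw [iteratedDeriv_succ', hcomp]
      have hu : ContDiff ℝ n (fun y => deriv f (g y)) := hf'.comp hgn
      rw [iteratedDeriv_mul_sum n (fun y => deriv f (g y)) (deriv g) hu hg' x]
      have step : ∀ j ∈ Finset.range (n+1),
          (n.choose j : ℝ) * (iteratedDeriv (n - j) (fun y => deriv f (g y)) x * iteratedDeriv j (deriv g) x)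
            = ∑ k ∈ Finset.range (n + 1), iteratedDeriv (k+1) f (g x) *
                ((n.choose j : ℝ) * (pBell D (n-j) k * D (j+1))) := by
        intro j hj
        simp only [Finset.mem_range] at hj
        have h1 : iteratedDeriv (n - j) (fun y => deriv f (g y)) x
            = ∑ k ∈ Finset.range (n - j + 1), iteratedDeriv k (deriv f) (g x) * pBell D (n-j) k := by
          have hfnj : ContDiff ℝ (↑(n - j)) (deriv f) := ContDiff.of_le hf' (show ((n-j:ℕ):WithTop ℕ∞) ≤ ((n:ℕ):WithTop ℕ∞) by exact_mod_cast Nat.sub_le n j)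
          have hgnj : ContDiff ℝ (↑(n - j)) g := ContDiff.of_le hgn (show ((n-j:ℕ):WithTop ℕ∞) ≤ ((n:ℕ):WithTop ℕ∞) by exact_mod_cast Nat.sub_le n j)
          have := ih (n - j) (by omega) (deriv f) g hfnj hgnj x
          simpa [Function.comp_def] using this
        have h2 : iteratedDeriv (n - j) (fun y => deriv f (g y)) x
            = ∑ k ∈ Finset.range (n + 1), iteratedDeriv (k+1) f (g x) * pBell D (n-j) k := by
          have hsub : ∑ k ∈ Finset.range (n - j + 1), iteratedDeriv k (deriv f) (g x) * pBell D (n-j) k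
              = ∑ k ∈ Finset.range (n + 1), iteratedDeriv k (deriv f) (g x) * pBell D (n-j) k :=
            Finset.sum_subset (Finset.range_subset_range.mpr (by omega)) (fun k _ hk => by
              simp only [Finset.mem_range, not_lt] at hk
              rw [pBell_eq_zero D k (n - j) (by omega), mul_zero])
          rw [h1, hsub]
          refine Finset.sum_congr rfl fun k hk => ?_
          rw [show iteratedDeriv (k+1) f = iteratedDeriv k (deriv f) from iteratedDeriv_succ' ..]
        have h3 : iteratedDeriv j (deriv g) x = D (j+1) := by
          show iteratedDeriv j (deriv g) x = iteratedDeriv (j+1) g x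
          rw [show iteratedDeriv (j+1) g = iteratedDeriv j (deriv g) from iteratedDeriv_succ' ..]
        rw [h2, h3, Finset.sum_mul, Finset.mul_sum]
        refine Finset.sum_congr rfl fun k hk => ?_
        ring
      rw [Finset.sum_congr rfl step, Finset.sum_comm]
      have rhs : ∑ k ∈ Finset.range (n + 1 + 1), iteratedDeriv k f (g x) * pBell D (n+1) k
          = ∑ k ∈ Finset.range (n + 1), iteratedDeriv (k+1) f (g x) * pBell D (n+1) (k+1) := by
        rw [Finset.sum_range_succ' _ (n+1)]
        rw [show pBell D (n+1) 0 = 0 from by rw [pBell]]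
        simp
      rw [rhs]
      refine Finset.sum_congr rfl fun k hk => ?_
      rw [← Finset.mul_sum]
      congr 1
      rw [pBell]

/-- The Faà di Bruno formula: for `n`-times continuously differentiable `f, g : ℝ → ℝ`,
`(f ∘ g)⁽ⁿ⁾(x) = ∑_{k=0}^{n} f⁽ᵏ⁾(g x) · B_{n,k}(g'(x), g''(x), …)`, where `B_{n,k}` is
the commutative partial Bell polynomial evaluated at `d_i := g⁽ⁱ⁾(x)`. -/
theorem stmt14 (n : ℕ) (hn : 1 ≤ n) (f g : ℝ → ℝ)
    (hf : ContDiff ℝ n f) (hg : ContDiff ℝ n g) (x : ℝ) :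
    iteratedDeriv n (f ∘ g) x =
      ∑ k ∈ Finset.range (n + 1), iteratedDeriv k f (g x) *
        MvPolynomial.aeval (fun i => iteratedDeriv i g x)
          (pBell (fun i => (X i : MvPolynomial ℕ ℚ)) n k) := by
  rw [faa_key n f g hf hg x]
  refine Finset.sum_congr rfl fun k hk => ?_
  congr 1
  have h := map_pBell ((aeval (fun i => iteratedDeriv i g x) : MvPolynomial ℕ ℚ →ₐ[ℚ] ℝ)).toRingHom
    (fun i => (X i : MvPolynomial ℕ ℚ)) k n
  simp only [AlgHom.toRingHom_eq_coe, RingHom.coe_coe, aeval_X] at h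
  rw [← h]
end
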